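/- arXiv:2603.06491 — 4 statements merged into one kernel-verified Lean document; each statement's English description precedes it below -/
import Mathlib

section
/- For every n ∈ ℕ, every a ∈ 𝔻, and every f in the Bergman space A²(𝔻), the function z ↦ (n+1)!·zⁿ/(1 − a z)^{n+2} (which equals the n-th partial derivative ∂ₐⁿ E_a(z)) belongs to A²(𝔻), and ∫_𝔻 conj((n+1)!·zⁿ/(1 − a z)^{n+2})·f(z) dμ(z) = f⁽ⁿ⁾(conj(a)), the n-th complex derivative of f evaluated at conj(a). -/
set_option maxHeartbeats 1000000

open MeasureTheory Complex Set
open Filter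
open scoped Real Topology

noncomputable section

/-- The open unit disk in ℂ. -/
def unitDisk : Set ℂ := {z : ℂ | ‖z‖ < 1}

/-- The normalized area measure `π⁻¹ · (2-dimensional Lebesgue measure)` on ℂ. -/
def μB : Measure ℂ := (ENNReal.ofReal (Real.pi)⁻¹) • (volume : Measure ℂ)


lemma unitDisk_eq_ball : unitDisk = Metric.ball (0:ℂ) 1 := by
  ext z; simp [unitDisk, Metric.mem_ball, Complex.dist_eq, Complex.norm_def]

lemma unitDisk_meas : MeasurableSet unitDisk := by
  rw [unitDisk_eq_ball]; exact measurableSet_ball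

lemma μB_disk_ne_top : μB unitDisk ≠ ⊤ := by
  rw [unitDisk_eq_ball, μB]
  simp only [Measure.smul_apply, smul_eq_mul]
  exact ENNReal.mul_ne_top ENNReal.ofReal_ne_top (measure_ball_lt_top).ne

lemma oneSubMul_ne_zero {a z : ℂ} (ha : ‖a‖ < 1) (hz : ‖z‖ ≤ 1) : 1 - a * z ≠ 0 := by
  intro h
  have h1 : a * z = 1 := by linear_combination -h
  have h2 : ‖a * z‖ = 1 := by rw [h1]; simp
  rw [norm_mul] at h2
  nlinarith [norm_nonneg a, norm_nonneg z]

lemma kernel_contOn (n : ℕ) {a : ℂ} (ha : ‖a‖ < 1) :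
    ContinuousOn (fun z => (Nat.factorial (n + 1) : ℂ) * z ^ n / (1 - a * z) ^ (n + 2))
      unitDisk := by
  apply ContinuousOn.div
  · fun_prop
  · fun_prop
  · intro z hz
    apply pow_ne_zero
    exact oneSubMul_ne_zero ha
      (le_of_lt (by simpa [unitDisk, Complex.norm_def] using hz : ‖z‖ < 1))

lemma kernel_bound (n : ℕ) {a z : ℂ} (ha : ‖a‖ < 1) (hz : ‖z‖ ≤ 1) :
    ‖(Nat.factorial (n + 1) : ℂ) * z ^ n / (1 - a * z) ^ (n + 2)‖
      ≤ (Nat.factorial (n + 1) : ℝ) / (1 - ‖a‖) ^ (n + 2) := by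
  rw [norm_div, norm_mul, norm_pow, norm_pow]
  have h1 : (0:ℝ) < 1 - ‖a‖ := by linarith
  have h2 : 1 - ‖a‖ ≤ ‖1 - a * z‖ := by
    have := norm_sub_norm_le (1 : ℂ) (a * z)
    have h3 : ‖a * z‖ ≤ ‖a‖ := by
      rw [norm_mul]
      nlinarith [norm_nonneg a, norm_nonneg z]
    simp only [norm_one] at this
    linarith
  have hzn : ‖z‖ ^ n ≤ 1 := pow_le_one₀ (norm_nonneg z) hz
  have hden : (1 - ‖a‖) ^ (n + 2) ≤ ‖1 - a * z‖ ^ (n + 2) :=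
    pow_le_pow_left₀ h1.le h2 _
  have hdenpos : (0:ℝ) < (1 - ‖a‖) ^ (n + 2) := pow_pos h1 _
  have hnorm : ‖((Nat.factorial (n + 1) : ℂ))‖ = (Nat.factorial (n + 1) : ℝ) := by
    simp
  rw [hnorm]
  apply div_le_div₀ (by positivity)
  · have h4 : (0:ℝ) ≤ (Nat.factorial (n + 1) : ℝ) := by positivity
    nlinarith [pow_nonneg (norm_nonneg z) n]
  · exact hdenpos
  · exact hden

lemma part1 (n : ℕ) {a : ℂ} (ha : ‖a‖ < 1) :
    DifferentiableOn ℂ (fun z => (Nat.factorial (n + 1) : ℂ) * z ^ n / (1 - a * z) ^ (n + 2))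
      unitDisk := by
  apply DifferentiableOn.div
  · exact (differentiableOn_pow n).const_mul _
  · apply DifferentiableOn.pow
    exact (differentiableOn_const 1).sub ((differentiableOn_id).const_mul a)
  · intro z hz
    apply pow_ne_zero
    exact oneSubMul_ne_zero ha (le_of_lt (by simpa [unitDisk, Complex.norm_def] using hz : ‖z‖ < 1))

lemma part2 (n : ℕ) {a : ℂ} (ha : ‖a‖ < 1) :
    IntegrableOn
      (fun z => ‖(Nat.factorial (n + 1) : ℂ) * z ^ n / (1 - a * z) ^ (n + 2)‖ ^ 2)
      unitDisk μB := by
  haveI : IsFiniteMeasure (μB.restrict unitDisk) :=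
    ⟨by rw [Measure.restrict_apply_univ]; exact lt_top_iff_ne_top.mpr μB_disk_ne_top⟩
  refine Integrable.mono' (integrable_const (((Nat.factorial (n + 1) : ℝ) / (1 - ‖a‖) ^ (n + 2)) ^ 2))
    (((kernel_contOn n ha).norm.pow 2).aestronglyMeasurable unitDisk_meas) ?_
  rw [ae_restrict_iff' unitDisk_meas]
  refine ae_of_all _ fun z hz => ?_
  have hzn : ‖z‖ ≤ 1 := le_of_lt (by simpa [unitDisk, Complex.norm_def] using hz)
  have := kernel_bound n ha hzn
  rw [Real.norm_eq_abs, _root_.abs_of_nonneg (by positivity)]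
  calc ‖(Nat.factorial (n + 1) : ℂ) * z ^ n / (1 - a * z) ^ (n + 2)‖ ^ 2
      ≤ ((Nat.factorial (n + 1) : ℝ) / (1 - ‖a‖) ^ (n + 2)) ^ 2 := by
        apply pow_le_pow_left₀ (norm_nonneg _) this
    _ = _ := rfl



lemma polar_symm_eq (p : ℝ × ℝ) :
    Complex.polarCoord.symm p = (p.1 : ℂ) * Complex.exp (p.2 * I) := by
  rw [Complex.polarCoord_symm_apply, Complex.exp_mul_I]
  rw [Complex.ofReal_cos, Complex.ofReal_sin]

lemma conj_polar_symm_eq (p : ℝ × ℝ) :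
    (starRingEnd ℂ) (Complex.polarCoord.symm p) = (p.1 : ℂ) * Complex.exp (-(p.2 * I)) := by
  rw [polar_symm_eq, map_mul, ← Complex.exp_conj]
  simp [Complex.conj_ofReal]

lemma integral_monomial (j m : ℕ) {r : ℝ} (hr : 0 < r) :
    ∫ z in Metric.ball (0:ℂ) r, z ^ j * ((starRingEnd ℂ) z) ^ m ∂volume
      = if j = m then ((Real.pi * r ^ (2*m+2) / (m+1) : ℝ) : ℂ) else 0 := by
  set g : ℂ → ℂ := fun z => z ^ j * ((starRingEnd ℂ) z) ^ m with hg
  have h1 : ∫ z in Metric.ball (0:ℂ) r, g z ∂volume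
      = ∫ z, (Metric.ball (0:ℂ) r).indicator g z ∂volume :=
    (integral_indicator measurableSet_ball).symm
  rw [h1, ← Complex.integral_comp_polarCoord_symm]
  have htarget : polarCoord.target = Set.Ioi (0:ℝ) ×ˢ Set.Ioo (-π) π := polarCoord_target
  set A : Set (ℝ × ℝ) := {p | p.1 < r} with hA
  have hAmeas : MeasurableSet A := measurableSet_lt (measurable_fst) measurable_const
  have h2 : ∀ p ∈ polarCoord.target, p.1 • (Metric.ball (0:ℂ) r).indicator g
        (Complex.polarCoord.symm p)
      = A.indicator (fun p : ℝ × ℝ => ((p.1:ℂ) ^ (j+m+1)) * Complex.exp (((j:ℂ) - m) * (p.2 * I))) p := by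
    intro p hp
    rw [htarget] at hp
    have hp1 : 0 < p.1 := hp.1
    have hmem : Complex.polarCoord.symm p ∈ Metric.ball (0:ℂ) r ↔ p ∈ A := by
      simp only [Metric.mem_ball, dist_zero_right, hA, mem_setOf_eq]
      rw [polar_symm_eq, norm_mul]
      simp [Complex.norm_exp_ofReal_mul_I, Complex.norm_real,
        abs_of_pos hp1]
    by_cases hmA : p ∈ A
    · rw [Set.indicator_of_mem (hmem.mpr hmA), Set.indicator_of_mem hmA]
      rw [hg]
      simp only []
      rw [conj_polar_symm_eq, polar_symm_eq, Complex.real_smul, mul_pow, mul_pow,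
        ← Complex.exp_nat_mul, ← Complex.exp_nat_mul]
      rw [show ((j:ℂ) - m) * ((p.2:ℂ) * I) = (j:ℂ)*((p.2:ℂ)*I) + (m:ℂ)*(-((p.2:ℂ)*I)) by ring,
        Complex.exp_add]
      ring
    · rw [Set.indicator_of_notMem (fun h => hmA (hmem.mp h)),
        Set.indicator_of_notMem hmA, smul_zero]
  rw [setIntegral_congr_fun (by rw [htarget]; exact (measurableSet_Ioi.prod measurableSet_Ioo)) h2]
  rw [setIntegral_indicator hAmeas]
  have h3 : polarCoord.target ∩ A = Set.Ioo (0:ℝ) r ×ˢ Set.Ioo (-π) π := by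
    rw [htarget]
    ext p
    simp only [Set.mem_inter_iff, Set.mem_prod, Set.mem_Ioi, Set.mem_Ioo, hA, mem_setOf_eq]
    tauto
  rw [h3]
  rw [Measure.volume_eq_prod, ← Measure.prod_restrict]
  rw [MeasureTheory.integral_prod_mul (μ := volume.restrict (Set.Ioo (0:ℝ) r))
    (ν := volume.restrict (Set.Ioo (-π) π))
    (fun x : ℝ => (x:ℂ) ^ (j+m+1)) (fun y : ℝ => Complex.exp (((j:ℂ) - m) * (y * I)))]
  have hI1 : ∫ x in Set.Ioo (0:ℝ) r, (x:ℂ) ^ (j+m+1) ∂volume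
      = ((r ^ (j+m+2) / (j+m+2) : ℝ) : ℂ) := by
    rw [← MeasureTheory.integral_Ioc_eq_integral_Ioo,
      ← intervalIntegral.integral_of_le hr.le]
    simp_rw [← Complex.ofReal_pow]
    rw [intervalIntegral.integral_ofReal, integral_pow]
    push_cast
    norm_num
    ring_nf
  rw [hI1]
  by_cases hjm : j = m
  · subst hjm
    simp only [sub_self, zero_mul, Complex.exp_zero, if_pos rfl]
    rw [setIntegral_const]
    rw [Real.volume_real_Ioo_of_le (by linarith [Real.pi_pos] : -π ≤ π)]
    rw [if_pos trivial,
      Complex.real_smul, mul_one, ← Complex.ofReal_mul, Complex.ofReal_inj]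
    have h2j : ((j:ℝ) + j + 2) ≠ 0 := by positivity
    have hj1 : ((j:ℝ) + 1) ≠ 0 := by positivity
    field_simp
    ring
  · rw [if_neg hjm]
    have hI2 : ∫ y in Set.Ioo (-π) π, Complex.exp (((j:ℂ) - m) * ((y:ℝ) * I)) ∂volume = 0 := by
      set c : ℂ := ((j:ℂ) - m) * I with hc
      have hc0 : c ≠ 0 := by
        apply mul_ne_zero _ Complex.I_ne_zero
        intro h
        have : (j:ℂ) = m := by linear_combination h
        exact hjm (by exact_mod_cast this)
      have harg : ∀ y : ℝ, ((j:ℂ) - m) * ((y:ℂ) * I) = c * (y:ℂ) := fun y => by rw [hc]; ring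
      simp_rw [harg]
      rw [← MeasureTheory.integral_Ioc_eq_integral_Ioo,
        ← intervalIntegral.integral_of_le (by linarith [Real.pi_pos] : -π ≤ π)]
      rw [integral_exp_mul_complex hc0]
      set l : ℤ := (j:ℤ) - m with hl
      have hcast : ((j:ℂ) - m) = (l : ℂ) := by push_cast [hl]; ring
      have h1 : c * (π:ℂ) = (l:ℂ) * (π * I) := by rw [hc, hcast]; ring
      have h2 : c * ((-π:ℝ):ℂ) = ((-l:ℤ):ℂ) * (π * I) := by
        rw [hc, hcast]; push_cast; ring
      rw [h1, h2, Complex.exp_int_mul, Complex.exp_int_mul, Complex.exp_pi_mul_I]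
      rw [zpow_neg, ← inv_zpow]
      norm_num
    rw [hI2, mul_zero]

variable {f : ℂ → ℂ}


/-- Taylor coefficients of f at 0. -/
def tc (f : ℂ → ℂ) (k : ℕ) : ℂ := (k.factorial : ℂ)⁻¹ * iteratedDeriv k f 0

lemma hasSum_taylor (hf : DifferentiableOn ℂ f (Metric.ball 0 1)) {z : ℂ}
    (hz : z ∈ Metric.ball (0:ℂ) 1) :
    HasSum (fun k => tc f k * z ^ k) (f z) := by
  have := Complex.hasSum_taylorSeries_on_ball hf hz
  refine this.congr_fun fun k => ?_
  simp [tc, smul_eq_mul]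
  ring

lemma summable_tc_mul_pow (hf : DifferentiableOn ℂ f (Metric.ball 0 1)) {r : ℝ}
    (hr0 : 0 ≤ r) (hr : r < 1) :
    Summable (fun k => ‖tc f k‖ * r ^ k) := by
  set ρ : ℝ := (1 + r) / 2 with hρ
  have hρ0 : 0 < ρ := by rw [hρ]; linarith
  have hρ1 : ρ < 1 := by rw [hρ]; linarith
  have hrρ : r < ρ := by rw [hρ]; linarith
  have hmem : ((ρ:ℂ)) ∈ Metric.ball (0:ℂ) 1 := by
    simp only [Metric.mem_ball, dist_zero_right, Complex.norm_real, Real.norm_eq_abs]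
    rwa [abs_of_pos hρ0]
  have hsum := (hasSum_taylor hf hmem).summable
  have htend : Tendsto (fun k => ‖tc f k * (ρ:ℂ) ^ k‖) atTop (𝓝 0) := by
    rw [show (0:ℝ) = ‖(0:ℂ)‖ by simp]
    exact (hsum.tendsto_atTop_zero).norm
  obtain ⟨C, hC⟩ := htend.bddAbove_range
  have hCmem : ∀ k, ‖tc f k * (ρ:ℂ) ^ k‖ ≤ C := fun k => hC (Set.mem_range_self k)
  refine Summable.of_nonneg_of_le (fun k => by positivity) (fun k => ?_)
    (((summable_geometric_of_lt_one (by positivity) (by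
      rw [div_lt_one hρ0]; exact hrρ)).mul_left C) : Summable fun k => C * (r / ρ) ^ k)
  · 
    have hnorm : ‖tc f k * (ρ:ℂ) ^ k‖ = ‖tc f k‖ * ρ ^ k := by
      rw [norm_mul, norm_pow, Complex.norm_real, Real.norm_eq_abs, abs_of_pos hρ0]
    have h1 : ‖tc f k‖ * r ^ k = ‖tc f k‖ * ρ ^ k * (r / ρ) ^ k := by
      have hρk : ρ ^ k ≠ 0 := pow_ne_zero _ hρ0.ne'
      field_simp
      rw [mul_assoc, ← mul_pow, show ρ * (r / ρ) = r by field_simp]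
    rw [h1, ← hnorm]
    apply mul_le_mul_of_nonneg_right (hCmem k) (by positivity)

lemma integrableOn_f (hf : DifferentiableOn ℂ f (Metric.ball 0 1))
    (hf_sq : IntegrableOn (fun z => ‖f z‖ ^ 2) (Metric.ball (0:ℂ) 1) μB) :
    IntegrableOn f (Metric.ball (0:ℂ) 1) volume := by
  have hc0 : (ENNReal.ofReal (Real.pi)⁻¹) ≠ 0 := by
    simp [ENNReal.ofReal_eq_zero, not_le, Real.pi_pos, inv_pos]
  have hsq : IntegrableOn (fun z => ‖f z‖ ^ 2) (Metric.ball (0:ℂ) 1) volume := by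
    rw [IntegrableOn] at hf_sq ⊢
    rw [μB, Measure.restrict_smul] at hf_sq
    exact (integrable_smul_measure hc0 ENNReal.ofReal_ne_top).mp hf_sq
  haveI : IsFiniteMeasure (volume.restrict (Metric.ball (0:ℂ) 1)) :=
    ⟨by rw [Measure.restrict_apply_univ]; exact measure_ball_lt_top⟩
  refine Integrable.mono' ((integrable_const 1).add hsq) 
    (hf.continuousOn.aestronglyMeasurable measurableSet_ball) (ae_of_all _ fun z => ?_)
  simp only [Pi.add_apply]
  rcases le_or_gt ‖f z‖ 1 with h | h
  · nlinarith [norm_nonneg (f z)]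
  · nlinarith [norm_nonneg (f z)]

lemma integrableOn_conjpow_mul (hf : DifferentiableOn ℂ f (Metric.ball 0 1))
    (hfi : IntegrableOn f (Metric.ball (0:ℂ) 1) volume) (m : ℕ) :
    IntegrableOn (fun z => ((starRingEnd ℂ) z) ^ m * f z) (Metric.ball (0:ℂ) 1) volume := by
  refine Integrable.mono' hfi.norm
    (((Complex.continuous_conj.pow m).aestronglyMeasurable).mul
      (hf.continuousOn.aestronglyMeasurable measurableSet_ball)) ?_
  rw [ae_restrict_iff' measurableSet_ball]
  refine ae_of_all _ fun z hz => ?_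
  have hz1 : ‖z‖ ≤ 1 := le_of_lt (by simpa [Metric.mem_ball, dist_zero_right] using hz)
  rw [norm_mul, norm_pow, RCLike.norm_conj]
  have : ‖z‖ ^ m ≤ 1 := pow_le_one₀ (norm_nonneg z) hz1
  nlinarith [norm_nonneg (f z)]

lemma coeff_integral_r (hf : DifferentiableOn ℂ f (Metric.ball 0 1)) (m : ℕ) {r : ℝ}
    (hr0 : 0 < r) (hr1 : r < 1) :
    ∫ z in Metric.ball (0:ℂ) r, ((starRingEnd ℂ) z) ^ m * f z ∂volume
      = ((Real.pi * r ^ (2*m+2) / (m+1) : ℝ) : ℂ) * tc f m := by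
  have hsub : Metric.ball (0:ℂ) r ⊆ Metric.ball (0:ℂ) 1 :=
    Metric.ball_subset_ball hr1.le
  have hpt : ∀ z ∈ Metric.ball (0:ℂ) r,
      ((starRingEnd ℂ) z) ^ m * f z = ∑' k, tc f k * (z ^ k * ((starRingEnd ℂ) z) ^ m) := by
    intro z hz
    have h := (hasSum_taylor hf (hsub hz)).mul_right (((starRingEnd ℂ) z) ^ m)
    have h2 : HasSum (fun k => tc f k * (z ^ k * ((starRingEnd ℂ) z) ^ m))
        (((starRingEnd ℂ) z) ^ m * f z) := by
      rw [mul_comm]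
      exact h.congr_fun fun k => by ring
    exact h2.tsum_eq.symm
  rw [setIntegral_congr_fun measurableSet_ball hpt]
  have hvol : (volume (Metric.ball (0:ℂ) r)) < ⊤ := measure_ball_lt_top
  set V : ℝ := (volume (Metric.ball (0:ℂ) r)).toReal with hV
  have hint : ∀ k : ℕ, IntegrableOn (fun z => tc f k * (z ^ k * ((starRingEnd ℂ) z) ^ m))
      (Metric.ball (0:ℂ) r) volume := by
    intro k
    apply Measure.integrableOn_of_bounded (M := ‖tc f k‖ * r ^ (k + m)) hvol.ne
    · exact Continuous.aestronglyMeasurable (by continuity)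
    · rw [ae_restrict_iff' measurableSet_ball]
      refine ae_of_all _ fun z hz => ?_
      have hz1 : ‖z‖ ≤ r := le_of_lt (by simpa [Metric.mem_ball, dist_zero_right] using hz)
      rw [norm_mul, norm_mul, norm_pow, norm_pow, RCLike.norm_conj]
      have h1 : ‖z‖ ^ k ≤ r ^ k := pow_le_pow_left₀ (norm_nonneg z) hz1 k
      have h2 : ‖z‖ ^ m ≤ r ^ m := pow_le_pow_left₀ (norm_nonneg z) hz1 m
      have h3 : (0:ℝ) ≤ ‖z‖ ^ k := by positivity
      have h4 : (0:ℝ) ≤ ‖z‖ ^ m := by positivity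
      have h5 : (0:ℝ) ≤ r ^ k := by positivity
      have h6 : (0:ℝ) ≤ ‖tc f k‖ := norm_nonneg _
      have h7 : ‖z‖ ^ k * ‖z‖ ^ m ≤ r ^ k * r ^ m := mul_le_mul h1 h2 h4 h5
      calc ‖tc f k‖ * (‖z‖ ^ k * ‖z‖ ^ m) ≤ ‖tc f k‖ * (r ^ k * r ^ m) :=
            mul_le_mul_of_nonneg_left h7 h6
        _ = ‖tc f k‖ * r ^ (k + m) := by rw [pow_add]
  have hsummable : Summable fun k => ∫ z in Metric.ball (0:ℂ) r,
      ‖tc f k * (z ^ k * ((starRingEnd ℂ) z) ^ m)‖ ∂volume := by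
    refine Summable.of_nonneg_of_le
      (fun k => integral_nonneg fun z => norm_nonneg _) (fun k => ?_)
      ((((summable_tc_mul_pow hf hr0.le hr1).mul_right (r ^ m)).mul_right V))
    have hb : ∀ z ∈ Metric.ball (0:ℂ) r,
        ‖‖tc f k * (z ^ k * ((starRingEnd ℂ) z) ^ m)‖‖ ≤ ‖tc f k‖ * r ^ k * r ^ m := by
      intro z hz
      have hz1 : ‖z‖ ≤ r := le_of_lt (by simpa [Metric.mem_ball, dist_zero_right] using hz)
      rw [norm_norm, norm_mul, norm_mul, norm_pow, norm_pow, RCLike.norm_conj]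
      have h1 : ‖z‖ ^ k ≤ r ^ k := pow_le_pow_left₀ (norm_nonneg z) hz1 k
      have h2 : ‖z‖ ^ m ≤ r ^ m := pow_le_pow_left₀ (norm_nonneg z) hz1 m
      have h3 : (0:ℝ) ≤ ‖z‖ ^ k := by positivity
      have h4 : (0:ℝ) ≤ ‖z‖ ^ m := by positivity
      have h5 : (0:ℝ) ≤ r ^ k := by positivity
      have h6 : (0:ℝ) ≤ ‖tc f k‖ := norm_nonneg _
      have h7 : ‖z‖ ^ k * ‖z‖ ^ m ≤ r ^ k * r ^ m := mul_le_mul h1 h2 h4 h5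
      calc ‖tc f k‖ * (‖z‖ ^ k * ‖z‖ ^ m) ≤ ‖tc f k‖ * (r ^ k * r ^ m) :=
            mul_le_mul_of_nonneg_left h7 h6
        _ = ‖tc f k‖ * r ^ k * r ^ m := by ring
    have := norm_setIntegral_le_of_norm_le_const_ae' hvol
      (ae_of_all _ hb)
    rw [Real.norm_eq_abs, _root_.abs_of_nonneg (integral_nonneg fun z => norm_nonneg _)] at this
    calc ∫ z in Metric.ball (0:ℂ) r, ‖tc f k * (z ^ k * ((starRingEnd ℂ) z) ^ m)‖ ∂volume
        ≤ ‖tc f k‖ * r ^ k * r ^ m * V := this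
      _ = ‖tc f k‖ * r ^ k * r ^ m * V := rfl
  rw [← integral_tsum_of_summable_integral_norm hint hsummable]
  have hterm : ∀ k : ℕ, ∫ z in Metric.ball (0:ℂ) r, tc f k * (z ^ k * ((starRingEnd ℂ) z) ^ m) ∂volume
      = tc f k * (if k = m then ((Real.pi * r ^ (2*m+2) / (m+1) : ℝ) : ℂ) else 0) := by
    intro k
    rw [MeasureTheory.integral_const_mul, integral_monomial k m hr0]
  simp_rw [hterm]
  rw [tsum_eq_single m (fun k hk => by rw [if_neg hk, mul_zero])]
  rw [if_pos rfl, mul_comm]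

lemma coeff_integral (hf : DifferentiableOn ℂ f (Metric.ball 0 1))
    (hfi : IntegrableOn f (Metric.ball (0:ℂ) 1) volume) (m : ℕ) :
    ∫ z in Metric.ball (0:ℂ) 1, ((starRingEnd ℂ) z) ^ m * f z ∂volume
      = ((Real.pi / (m+1) : ℝ) : ℂ) * tc f m := by
  set rr : ℕ → ℝ := fun i => 1 - 1/(i+2) with hrr
  have hr0 : ∀ i, 0 < rr i := by
    intro i
    have h1 : 1/((i:ℝ)+2) ≤ 1/2 := by
      apply one_div_le_one_div_of_le <;> [norm_num; (push_cast; linarith [Nat.cast_nonneg (α := ℝ) i])]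
    simp only [hrr]
    linarith
  have hr1 : ∀ i, rr i < 1 := by
    intro i
    have : 0 < 1/((i:ℝ)+2) := by positivity
    simp only [hrr]; linarith
  set s : ℕ → Set ℂ := fun i => Metric.ball (0:ℂ) (rr i) with hs
  have hsm : ∀ i, MeasurableSet (s i) := fun i => measurableSet_ball
  have hmono : Monotone s := by
    intro i j hij
    apply Metric.ball_subset_ball
    simp only [hrr]
    have : 1/((j:ℝ)+2) ≤ 1/((i:ℝ)+2) := by
      apply one_div_le_one_div_of_le
      · positivity
      · have : (i:ℝ) ≤ (j:ℝ) := Nat.cast_le.mpr hij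
        linarith
    linarith
  have hunion : (⋃ i, s i) = Metric.ball (0:ℂ) 1 := by
    ext z
    simp only [mem_iUnion, Metric.mem_ball, dist_zero_right, hs, hrr]
    constructor
    · rintro ⟨i, hi⟩
      have : 0 < 1/((i:ℝ)+2) := by positivity
      linarith
    · intro hz
      obtain ⟨nn, hn⟩ := exists_nat_one_div_lt (by linarith : (0:ℝ) < 1 - ‖z‖)
      refine ⟨nn, ?_⟩
      have h2 : 1/((nn:ℝ)+2) < 1/((nn:ℝ)+1) := by
        apply one_div_lt_one_div_of_lt
        · positivity
        · linarith
      linarith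
  have hintU : IntegrableOn (fun z => ((starRingEnd ℂ) z) ^ m * f z) (⋃ i, s i) volume := by
    rw [hunion]
    exact integrableOn_conjpow_mul hf hfi m
  have h1 := tendsto_setIntegral_of_monotone hsm hmono hintU
  rw [hunion] at h1
  have h2 : ∀ i, ∫ z in s i, ((starRingEnd ℂ) z) ^ m * f z ∂volume
      = ((Real.pi * (rr i) ^ (2*m+2) / (m+1) : ℝ) : ℂ) * tc f m := fun i =>
    coeff_integral_r hf m (hr0 i) (hr1 i)
  have hrt : Tendsto rr atTop (𝓝 1) := by
    have ha : Tendsto (fun i : ℕ => ((i:ℝ)+2)) atTop atTop :=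
      tendsto_atTop_add_const_right _ 2 tendsto_natCast_atTop_atTop
    have hb := ha.inv_tendsto_atTop
    have hc : Tendsto (fun i : ℕ => 1/((i:ℝ)+2)) atTop (𝓝 0) := by
      simpa [one_div, Pi.inv_def] using hb
    have hd := (tendsto_const_nhds (x := (1:ℝ)) (f := atTop (α := ℕ))).sub hc
    simp only [sub_zero] at hd
    refine hd.congr fun i => ?_
    simp [hrr, one_div]
  have h3 : Tendsto (fun i => ((Real.pi * (rr i) ^ (2*m+2) / (m+1) : ℝ) : ℂ) * tc f m)
      atTop (𝓝 (((Real.pi / (m+1) : ℝ) : ℂ) * tc f m)) := by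
    have hp : Tendsto (fun i => Real.pi * (rr i) ^ (2*m+2) / (m+1)) atTop
        (𝓝 (Real.pi / (m+1))) := by
      have := ((hrt.pow (2*m+2)).const_mul Real.pi).div_const ((m:ℝ)+1)
      simpa using this
    exact ((Complex.continuous_ofReal.tendsto _).comp hp).mul_const (tc f m)
  have h1' : Tendsto (fun i => ((Real.pi * (rr i) ^ (2*m+2) / (m+1) : ℝ) : ℂ) * tc f m)
      atTop (𝓝 (∫ z in Metric.ball (0:ℂ) 1, ((starRingEnd ℂ) z) ^ m * f z ∂volume)) := by
    refine h1.congr fun i => (h2 i)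
  exact tendsto_nhds_unique h1' h3

lemma iteratedDeriv_comp_eq (f : ℂ → ℂ) (n k : ℕ) :
    iteratedDeriv k (iteratedDeriv n f) = iteratedDeriv (k + n) f := by
  induction k with
  | zero => simp
  | succ k ih =>
      rw [show k+1+n = (k+n)+1 by omega, iteratedDeriv_succ, ih, ← iteratedDeriv_succ]

lemma analyticOnNhd_iteratedDeriv (hf : DifferentiableOn ℂ f (Metric.ball 0 1)) (n : ℕ) :
    AnalyticOnNhd ℂ (iteratedDeriv n f) (Metric.ball (0:ℂ) 1) := by
  induction n with
  | zero => simpa using hf.analyticOnNhd Metric.isOpen_ball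
  | succ n ih => rw [iteratedDeriv_succ]; exact ih.deriv

lemma hasSum_iteratedDeriv_taylor (hf : DifferentiableOn ℂ f (Metric.ball 0 1)) (n : ℕ)
    {b : ℂ} (hb : b ∈ Metric.ball (0:ℂ) 1) :
    HasSum (fun k => (k.factorial : ℂ)⁻¹ * b ^ k * iteratedDeriv (k + n) f 0)
      (iteratedDeriv n f b) := by
  have hg : DifferentiableOn ℂ (iteratedDeriv n f) (Metric.ball (0:ℂ) 1) :=
    (analyticOnNhd_iteratedDeriv hf n).differentiableOn
  have h := Complex.hasSum_taylorSeries_on_ball hg hb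
  refine h.congr_fun fun k => ?_
  rw [← iteratedDeriv_comp_eq f n k]
  simp [smul_eq_mul]
  ring

lemma fact_identity (n k : ℕ) :
    ((n+1).factorial : ℂ) * (((k+(n+1)).choose (n+1) : ℕ) : ℂ)
        * (((Real.pi / ((k+n : ℕ) + 1) : ℝ)) : ℂ) * ((k+n).factorial : ℂ)⁻¹
      = ((Real.pi : ℝ) : ℂ) * ((k.factorial : ℂ))⁻¹ := by
  have hkey : ((k+n+1).choose (n+1)) * (n+1).factorial * k.factorial
      = (k+n+1).factorial := by
    have := Nat.choose_mul_factorial_mul_factorial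
      (show (n+1) ≤ k+n+1 by omega) (n := k+n+1)
    simpa [show k+n+1-(n+1) = k by omega, mul_assoc, mul_comm, mul_left_comm] using this
  have hc : (k+(n+1)) = k+n+1 := by omega
  rw [hc]
  have hfac : ((k+n+1).factorial : ℂ) = ((k+n+1 : ℕ) : ℂ) * ((k+n).factorial : ℂ) := by
    rw [show (k+n+1) = (k+n)+1 from rfl, Nat.factorial_succ]
    push_cast
    ring
  have hkeyC : (((k+n+1).choose (n+1) : ℕ) : ℂ) * ((n+1).factorial : ℂ) * (k.factorial : ℂ)
      = ((k+n+1 : ℕ) : ℂ) * ((k+n).factorial : ℂ) := by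
    rw [← hfac]
    exact_mod_cast congrArg (Nat.cast : ℕ → ℂ) hkey
  have h1 : ((k+n).factorial : ℂ) ≠ 0 := Nat.cast_ne_zero.mpr (Nat.factorial_ne_zero _)
  have h2 : ((k.factorial : ℕ) : ℂ) ≠ 0 := Nat.cast_ne_zero.mpr (Nat.factorial_ne_zero _)
  have h3 : ((k+n+1 : ℕ) : ℂ) ≠ 0 := Nat.cast_ne_zero.mpr (by omega)
  have hcast : (((Real.pi / ((k+n : ℕ) + 1) : ℝ)) : ℂ)
      = ((Real.pi : ℝ) : ℂ) / ((k+n+1 : ℕ) : ℂ) := by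
    push_cast
    ring
  rw [hcast]
  set F : ℂ := ((n+1).factorial : ℂ) with hF
  set C : ℂ := (((k+n+1).choose (n+1) : ℕ) : ℂ) with hC
  set M : ℂ := ((k+n+1 : ℕ) : ℂ) with hM
  set G : ℂ := ((k+n).factorial : ℂ) with hG
  set K : ℂ := ((k.factorial : ℕ) : ℂ) with hK
  clear_value F C M G K
  field_simp
  linear_combination hkeyC

lemma main_volume (hf : DifferentiableOn ℂ f (Metric.ball 0 1))
    (hfi : IntegrableOn f (Metric.ball (0:ℂ) 1) volume) (n : ℕ) {a : ℂ} (ha : ‖a‖ < 1) :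
    ∫ z in Metric.ball (0:ℂ) 1,
        (starRingEnd ℂ) ((Nat.factorial (n + 1) : ℂ) * z ^ n / (1 - a * z) ^ (n + 2)) * f z ∂volume
      = ((Real.pi : ℝ) : ℂ) * iteratedDeriv n f ((starRingEnd ℂ) a) := by
  set b : ℂ := (starRingEnd ℂ) a with hbdef
  have hb : ‖b‖ < 1 := by rwa [hbdef, RCLike.norm_conj]
  have hbmem : b ∈ Metric.ball (0:ℂ) 1 := by
    simpa [Metric.mem_ball, dist_zero_right] using hb
  set F : ℂ := ((n+1).factorial : ℂ) with hF
  set T : ℕ → ℂ → ℂ := fun k z =>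
    (F * (((k+(n+1)).choose (n+1) : ℕ) : ℂ) * b ^ k)
      * (((starRingEnd ℂ) z) ^ (k+n) * f z) with hT
  have hpt : ∀ z ∈ Metric.ball (0:ℂ) 1,
      (starRingEnd ℂ) (F * z ^ n / (1 - a * z) ^ (n + 2)) * f z = ∑' k, T k z := by
    intro z hz
    have hz1 : ‖z‖ < 1 := by simpa [Metric.mem_ball, dist_zero_right] using hz
    have hbz : ‖b * (starRingEnd ℂ) z‖ < 1 := by
      rw [norm_mul, hbdef, RCLike.norm_conj, RCLike.norm_conj]
      nlinarith [norm_nonneg a, norm_nonneg z]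
    have hgeo := hasSum_choose_mul_geometric_of_norm_lt_one (𝕜 := ℂ) (n+1) hbz
    have h2 := hgeo.mul_left (F * ((starRingEnd ℂ) z) ^ n * f z)
    have h3 : HasSum (fun k => T k z)
        (F * ((starRingEnd ℂ) z) ^ n * f z * (1 / (1 - b * (starRingEnd ℂ) z) ^ (n+1+1))) := by
      refine h2.congr_fun fun k => ?_
      rw [hT]
      simp only []
      rw [mul_pow, pow_add]
      ring
    rw [h3.tsum_eq]
    rw [show n+1+1 = n+2 from rfl]
    rw [map_div₀, map_mul, map_pow, map_pow, map_sub, map_one, map_mul]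
    rw [show (starRingEnd ℂ) F = F by rw [hF]; exact Complex.conj_natCast _]
    rw [← hbdef]
    ring
  rw [setIntegral_congr_fun measurableSet_ball hpt]
  have hint : ∀ k, IntegrableOn (fun z => T k z) (Metric.ball (0:ℂ) 1) volume := by
    intro k
    exact (integrableOn_conjpow_mul hf hfi (k+n)).const_mul _
  set M : ℝ := ∫ z in Metric.ball (0:ℂ) 1, ‖f z‖ ∂volume with hM
  have hM0 : 0 ≤ M := integral_nonneg fun z => norm_nonneg _
  have hconj_le : ∀ k : ℕ, (∫ z in Metric.ball (0:ℂ) 1,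
      ‖((starRingEnd ℂ) z) ^ (k+n) * f z‖ ∂volume) ≤ M := by
    intro k
    refine setIntegral_mono_on ((integrableOn_conjpow_mul hf hfi (k+n)).norm)
      hfi.norm measurableSet_ball fun z hz => ?_
    have hz1 : ‖z‖ ≤ 1 := le_of_lt (by simpa [Metric.mem_ball, dist_zero_right] using hz)
    rw [norm_mul, norm_pow, RCLike.norm_conj]
    have : ‖z‖ ^ (k+n) ≤ 1 := pow_le_one₀ (norm_nonneg z) hz1
    nlinarith [norm_nonneg (f z)]
  have hsummable : Summable fun k => ∫ z in Metric.ball (0:ℂ) 1, ‖T k z‖ ∂volume := by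
    have hs : Summable fun k : ℕ =>
        (((n+1).factorial : ℝ) * ((((k+(n+1)).choose (n+1) : ℕ) : ℝ) * ‖a‖ ^ k)) * M := by
      refine Summable.mul_right M (Summable.mul_left _ ?_)
      have := summable_choose_mul_geometric_of_norm_lt_one (R := ℝ) (n+1)
        (r := ‖a‖) (by rwa [Real.norm_eq_abs, _root_.abs_of_nonneg (norm_nonneg a)])
      exact this
    refine Summable.of_nonneg_of_le
      (fun k => integral_nonneg fun z => norm_nonneg _) (fun k => ?_) hs
    have heq : ∀ z : ℂ, ‖T k z‖
        = ‖F * (((k+(n+1)).choose (n+1) : ℕ) : ℂ) * b ^ k‖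
          * ‖((starRingEnd ℂ) z) ^ (k+n) * f z‖ := fun z => by rw [hT]; exact norm_mul _ _
    simp_rw [heq]
    rw [MeasureTheory.integral_const_mul]
    have hnorm : ‖F * (((k+(n+1)).choose (n+1) : ℕ) : ℂ) * b ^ k‖
        = ((n+1).factorial : ℝ) * ((((k+(n+1)).choose (n+1) : ℕ) : ℝ) * ‖a‖ ^ k) := by
      rw [norm_mul, norm_mul, norm_pow, hF]
      rw [show ‖b‖ = ‖a‖ from by rw [hbdef]; exact RCLike.norm_conj a]
      simp [Complex.norm_natCast]
      ring
    rw [hnorm]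
    exact mul_le_mul_of_nonneg_left (hconj_le k) (by positivity)
  rw [← integral_tsum_of_summable_integral_norm hint hsummable]
  have hterm : ∀ k : ℕ, (∫ z in Metric.ball (0:ℂ) 1, T k z ∂volume)
      = ((Real.pi : ℝ) : ℂ) * ((k.factorial : ℂ)⁻¹ * b ^ k * iteratedDeriv (k+n) f 0) := by
    intro k
    rw [hT]
    simp only []
    rw [MeasureTheory.integral_const_mul, coeff_integral hf hfi (k+n)]
    rw [tc]
    linear_combination (b ^ k * iteratedDeriv (k+n) f 0) * fact_identity n k
  simp_rw [hterm]
  rw [tsum_mul_left, (hasSum_iteratedDeriv_taylor hf n hbmem).tsum_eq]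


/-- For every `n ∈ ℕ`, `a ∈ 𝔻`, and `f ∈ A²(𝔻)`, the function
`z ↦ (n+1)!·zⁿ/(1 − a z)^{n+2}` (which is `∂ₐⁿ E_a(z)`) belongs to `A²(𝔻)` and
`∫_𝔻 conj((n+1)!·zⁿ/(1 − a z)^{n+2})·f(z) dμ(z) = f⁽ⁿ⁾(conj a)`. -/
theorem statement_4 (n : ℕ) (a : ℂ) (ha : a ∈ unitDisk) (f : ℂ → ℂ)
    (hf_hol : DifferentiableOn ℂ f unitDisk)
    (hf_sq : IntegrableOn (fun z => ‖f z‖ ^ 2) unitDisk μB) :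
    DifferentiableOn ℂ (fun z => (Nat.factorial (n + 1) : ℂ) * z ^ n / (1 - a * z) ^ (n + 2))
        unitDisk ∧
    IntegrableOn
        (fun z => ‖(Nat.factorial (n + 1) : ℂ) * z ^ n / (1 - a * z) ^ (n + 2)‖ ^ 2)
        unitDisk μB ∧
    ∫ z in unitDisk,
        (starRingEnd ℂ) ((Nat.factorial (n + 1) : ℂ) * z ^ n / (1 - a * z) ^ (n + 2)) * f z ∂μB
      = iteratedDeriv n f ((starRingEnd ℂ) a) := by
  have ha' : ‖a‖ < 1 := by simpa [unitDisk, Complex.norm_def] using ha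
  refine ⟨part1 n ha', part2 n ha', ?_⟩
  rw [unitDisk_eq_ball] at hf_hol hf_sq ⊢
  have hfi : IntegrableOn f (Metric.ball (0:ℂ) 1) volume := integrableOn_f hf_hol hf_sq
  rw [μB, Measure.restrict_smul, integral_smul_measure,
    ENNReal.toReal_ofReal (by positivity : (0:ℝ) ≤ (Real.pi)⁻¹)]
  rw [main_volume hf_hol hfi n ha', Complex.real_smul]
  have hπ : ((Real.pi : ℝ) : ℂ) ≠ 0 := Complex.ofReal_ne_zero.mpr Real.pi_ne_zero
  push_cast
  field_simp
end
end

section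
/- Let φ : 𝔻 → 𝔻 be an injective holomorphic map. Then F_φ(z, w) = 0 for all z, w ∈ 𝔻 with z ≠ w if and only if φ is a fractional linear transformation, i.e., there exist a, b, c, d ∈ ℂ with a·d − b·c = 1 such that for every z ∈ 𝔻 one has c·z + d ≠ 0 and φ(z) = (a·z + b)/(c·z + d). -/
open MeasureTheory Complex Set

noncomputable section

/-- The cocycle `F_φ(z,w) = φ'(z)φ'(w)/(φ(z) − φ(w))² − 1/(z − w)²`. -/
def Fcocycle (φ : ℂ → ℂ) (z w : ℂ) : ℂ :=
  deriv φ z * deriv φ w / (φ z - φ w) ^ 2 - 1 / (z - w) ^ 2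

lemma isOpen_unitDisk : IsOpen unitDisk := isOpen_lt continuous_norm continuous_const

lemma preconnected_unitDisk : IsPreconnected unitDisk := by
  have : unitDisk = Metric.ball (0:ℂ) 1 := by
    ext z; simp [unitDisk, Metric.mem_ball, Complex.dist_eq]
  rw [this]
  exact (convex_ball (0:ℂ) 1).isPreconnected

lemma mobius_of_Fcocycle_eq_zero (φ : ℂ → ℂ)
    (hφd : DifferentiableOn ℂ φ unitDisk)
    (hφi : Set.InjOn φ unitDisk)
    (h : ∀ z ∈ unitDisk, ∀ w ∈ unitDisk, z ≠ w → Fcocycle φ z w = 0) :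
    ∃ a b c d : ℂ, a * d - b * c = 1 ∧
        ∀ z ∈ unitDisk, c * z + d ≠ 0 ∧ φ z = (a * z + b) / (c * z + d) := by
  have h0 : (0:ℂ) ∈ unitDisk := by simp [unitDisk]
  have hh : (1/2:ℂ) ∈ unitDisk := by simp [unitDisk]; norm_num
  have hne : (1/2:ℂ) ≠ 0 := by norm_num
  -- the key algebraic identity
  have key : ∀ z ∈ unitDisk, ∀ w ∈ unitDisk, z ≠ w →
      (φ z - φ w) ^ 2 = deriv φ z * deriv φ w * (z - w) ^ 2 := by
    intro z hz w hw hzw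
    have hF := h z hz w hw hzw
    have hp : φ z - φ w ≠ 0 := sub_ne_zero.mpr (fun e => hzw (hφi hz hw e))
    have hq : z - w ≠ 0 := sub_ne_zero.mpr hzw
    unfold Fcocycle at hF
    rw [sub_eq_zero] at hF
    field_simp at hF
    linear_combination -hF
  set p1 := φ 0 with hp1
  set p2 := φ (1/2 : ℂ) with hp2
  have hp12 : p1 ≠ p2 := fun e => hne (hφi hh h0 e.symm)
  have hd1 : deriv φ 0 ≠ 0 := by
    intro e
    have hk := key (1/2) hh 0 h0 hne
    rw [e, mul_zero, zero_mul] at hk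
    have h2 : φ (1/2:ℂ) - φ 0 = 0 := pow_eq_zero_iff (two_ne_zero) |>.mp hk
    exact hp12 (sub_eq_zero.mp h2).symm
  have hd2 : deriv φ (1/2 : ℂ) ≠ 0 := by
    intro e
    have hk := key 0 h0 (1/2) hh hne.symm
    rw [e, mul_zero, zero_mul] at hk
    have h2 : φ 0 - φ (1/2:ℂ) = 0 := pow_eq_zero_iff (two_ne_zero) |>.mp hk
    exact hp12 (sub_eq_zero.mp h2)
  obtain ⟨s1, hs1⟩ := IsAlgClosed.exists_pow_nat_eq (k := ℂ) (deriv φ 0) zero_lt_two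
  obtain ⟨s2, hs2⟩ := IsAlgClosed.exists_pow_nat_eq (k := ℂ) (deriv φ (1/2 : ℂ)) zero_lt_two
  have hs1' : s1 ≠ 0 := fun e => hd1 (by rw [← hs1, e]; ring)
  have hs2' : s2 ≠ 0 := fun e => hd2 (by rw [← hs2, e]; ring)
  set A : ℂ → ℂ := fun z => (φ z - p1) * (z - 1/2) * s2 with hA
  set B : ℂ → ℂ := fun z => (φ z - p2) * z * s1 with hB
  have hprod : ∀ z ∈ unitDisk, (A z - B z) * (A z + B z) = 0 := by
    intro z hz
    rcases eq_or_ne z 0 with rfl | hz0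
    · simp [hA, hB, hp1]
    rcases eq_or_ne z (1/2) with rfl | hzh
    · simp [hA, hB, hp2]
    have k1 := key z hz 0 h0 hz0
    have k2 := key z hz (1/2) hh hzh
    simp only [hA, hB]
    linear_combination (z - 1/2)^2 * s2^2 * k1 - z^2 * s1^2 * k2
      + z^2 * (z - 1/2)^2 * deriv φ z * (deriv φ 0 * hs2 - deriv φ (1/2:ℂ) * hs1)
  -- A - B and A + B are analytic
  have hAan : AnalyticOnNhd ℂ A unitDisk := by
    apply DifferentiableOn.analyticOnNhd _ isOpen_unitDisk
    exact (((hφd.sub_const p1).mul ((differentiableOn_id).sub_const (1/2:ℂ))).mul_const s2)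
  have hBan : AnalyticOnNhd ℂ B unitDisk := by
    apply DifferentiableOn.analyticOnNhd _ isOpen_unitDisk
    exact (((hφd.sub_const p2).mul differentiableOn_id).mul_const s1)
  have hcase : (∀ z ∈ unitDisk, A z = B z) ∨ (∀ z ∈ unitDisk, A z = -B z) := by
    by_cases hc : ∀ z ∈ unitDisk, A z = B z
    · exact Or.inl hc
    push_neg at hc
    obtain ⟨z0, hz0, hz0'⟩ := hc
    right
    have hfan : AnalyticOnNhd ℂ (fun z => A z + B z) unitDisk := hAan.add hBan
    have hcont : ContinuousAt (fun z => A z - B z) z0 :=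
      ((hAan z0 hz0).sub (hBan z0 hz0)).continuousAt
    have hne0 : (fun z => A z - B z) z0 ≠ 0 := sub_ne_zero.mpr hz0'
    have hev : ∀ᶠ z in nhds z0, A z - B z ≠ 0 := hcont.eventually_ne hne0
    have hevU : ∀ᶠ z in nhds z0, z ∈ unitDisk := isOpen_unitDisk.mem_nhds hz0
    have hev0 : (fun z => A z + B z) =ᶠ[nhds z0] 0 := by
      filter_upwards [hev, hevU] with z h1 h2
      have := hprod z h2
      rcases mul_eq_zero.mp this with h | h
      · exact absurd h h1
      · exact h
    have := hfan.eqOn_zero_of_preconnected_of_eventuallyEq_zero preconnected_unitDisk hz0 hev0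
    intro z hz
    have hz' := this hz
    simp only [Pi.zero_apply] at hz'
    exact eq_neg_of_add_eq_zero_left hz'
  obtain ⟨ε, hε, heq⟩ : ∃ ε : ℂ, ε ^ 2 = 1 ∧ ∀ z ∈ unitDisk, A z = ε * B z := by
    rcases hcase with hc | hc
    · exact ⟨1, by norm_num, fun z hz => by rw [one_mul]; exact hc z hz⟩
    · exact ⟨-1, by norm_num, fun z hz => by rw [neg_one_mul]; exact hc z hz⟩
  have hεne : ε ≠ 0 := fun e => by simp [e] at hε
  set a := p1 * s2 - ε * p2 * s1 with ha
  set b := -(p1 * s2) / 2 with hb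
  set c := s2 - ε * s1 with hc
  set d := -s2 / 2 with hd
  have hmul : ∀ z ∈ unitDisk, φ z * (c * z + d) = a * z + b := by
    intro z hz
    have hzz := heq z hz
    simp only [hA, hB] at hzz
    simp only [ha, hb, hc, hd]
    linear_combination hzz
  have hDdet : a * d - b * c = ε * s1 * s2 * (p2 - p1) / 2 := by
    simp only [ha, hb, hc, hd]; ring
  have hD : a * d - b * c ≠ 0 := by
    rw [hDdet]
    have hp' : p2 - p1 ≠ 0 := sub_ne_zero.mpr (fun e => hp12 e.symm)
    exact div_ne_zero (mul_ne_zero (mul_ne_zero (mul_ne_zero hεne hs1') hs2') hp') two_ne_zero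
  have hden : ∀ z ∈ unitDisk, c * z + d ≠ 0 := by
    intro z hz he
    have h2 : a * z + b = 0 := by rw [← hmul z hz, he, mul_zero]
    exact hD (by linear_combination a * he - c * h2)
  obtain ⟨r, hr⟩ := IsAlgClosed.exists_pow_nat_eq (k := ℂ) (a * d - b * c) zero_lt_two
  have hr' : r ≠ 0 := fun e => hD (by rw [← hr, e]; ring)
  refine ⟨a / r, b / r, c / r, d / r, ?_, ?_⟩
  · have hgg : a / r * (d / r) - b / r * (c / r) = (a * d - b * c) / r ^ 2 := by ring
    rw [hgg, ← hr]
    exact div_self (pow_ne_zero 2 hr')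
  · intro z hz
    have hdz := hden z hz
    have h1 : c / r * z + d / r = (c * z + d) / r := by ring
    have h2 : a / r * z + b / r = (a * z + b) / r := by ring
    refine ⟨by rw [h1]; exact div_ne_zero hdz hr', ?_⟩
    have h3 : (a * z + b) / r / ((c * z + d) / r) = (a * z + b) / (c * z + d) := by
      field_simp
    rw [h1, h2, h3, eq_div_iff hdz]
    exact hmul z hz

lemma Fcocycle_eq_zero_of_mobius (φ : ℂ → ℂ)
    (a b c d : ℂ) (hdet : a * d - b * c = 1)
    (hfz : ∀ z ∈ unitDisk, c * z + d ≠ 0 ∧ φ z = (a * z + b) / (c * z + d))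
    (z : ℂ) (hz : z ∈ unitDisk) (w : ℂ) (hw : w ∈ unitDisk) (hzw : z ≠ w) :
    Fcocycle φ z w = 0 := by
  have hu : c * z + d ≠ 0 := (hfz z hz).1
  have hv : c * w + d ≠ 0 := (hfz w hw).1
  have hder : ∀ x ∈ unitDisk, deriv φ x = 1 / (c * x + d) ^ 2 := by
    intro x hx
    have hux : c * x + d ≠ 0 := (hfz x hx).1
    have hev : φ =ᶠ[nhds x] (fun y => (a * y + b) / (c * y + d)) :=
      Filter.eventuallyEq_of_mem (isOpen_unitDisk.mem_nhds hx) (fun y hy => (hfz y hy).2)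
    have h1 : HasDerivAt (fun y : ℂ => a * y + b) a x := by
      simpa using ((hasDerivAt_id x).const_mul a).add_const b
    have h2 : HasDerivAt (fun y : ℂ => c * y + d) c x := by
      simpa using ((hasDerivAt_id x).const_mul c).add_const d
    have hM : HasDerivAt (fun y => (a * y + b) / (c * y + d))
        ((a * (c * x + d) - (a * x + b) * c) / (c * x + d) ^ 2) x := h1.div h2 hux
    have := (hM.congr_of_eventuallyEq hev).deriv
    rw [this]
    have hnum : a * (c * x + d) - (a * x + b) * c = 1 := by linear_combination hdet
    rw [hnum]
  have hsub : φ z - φ w = (z - w) / ((c * z + d) * (c * w + d)) := by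
    rw [(hfz z hz).2, (hfz w hw).2]
    rw [div_sub_div _ _ hu hv]
    congr 1
    linear_combination (z - w) * hdet
  have hzw' : z - w ≠ 0 := sub_ne_zero.mpr hzw
  unfold Fcocycle
  rw [hder z hz, hder w hw, hsub]
  field_simp
  ring

/-- For an injective holomorphic map `φ : 𝔻 → 𝔻`, `F_φ` vanishes identically (off the
diagonal) if and only if `φ` is a fractional linear transformation. -/
theorem statement_8 (φ : ℂ → ℂ)
    (hφm : Set.MapsTo φ unitDisk unitDisk)
    (hφd : DifferentiableOn ℂ φ unitDisk)
    (hφi : Set.InjOn φ unitDisk) :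
    (∀ z ∈ unitDisk, ∀ w ∈ unitDisk, z ≠ w → Fcocycle φ z w = 0) ↔
      ∃ a b c d : ℂ, a * d - b * c = 1 ∧
        ∀ z ∈ unitDisk, c * z + d ≠ 0 ∧ φ z = (a * z + b) / (c * z + d) := by
  constructor
  · exact mobius_of_Fcocycle_eq_zero φ hφd hφi
  · rintro ⟨a, b, c, d, hdet, hfz⟩ z hz w hw hzw
    exact Fcocycle_eq_zero_of_mobius φ a b c d hdet hfz z hz w hw hzw
end
end

section
/- Let f : 𝔻 → 𝔻 be an injective holomorphic map that extends to a neighborhood of the closed disk, i.e., there exist an open set U ⊆ ℂ containing the closure of 𝔻 and an injective holomorphic map f̃ : U → ℂ with f̃|_𝔻 = f. Then F_f is square-integrable on 𝔻 × 𝔻. -/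
open MeasureTheory Complex Set

noncomputable section

section Aux

open Filter Metric
open scoped Topology

lemma aux_deriv_ne_zero {V : Set ℂ} (hV : IsOpen V) {g : ℂ → ℂ}
    (hd : DifferentiableOn ℂ g V) (hi : Set.InjOn g V) {z₀ : ℂ} (hz₀ : z₀ ∈ V) :
    deriv g z₀ ≠ 0 := by
  intro h0
  have han : AnalyticOnNhd ℂ g V := hd.analyticOnNhd hV
  have hGan : AnalyticAt ℂ (fun z => g z - g z₀) z₀ := (han z₀ hz₀).sub analyticAt_const
  have hne : ¬ ∀ᶠ z in 𝓝 z₀, g z - g z₀ = 0 := by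
    intro h
    obtain ⟨t, htsub, hto, htz⟩ := _root_.eventually_nhds_iff.mp (h.and (hV.eventually_mem hz₀))
    obtain ⟨ε, hε, hb⟩ := Metric.isOpen_iff.mp hto z₀ htz
    have hz₁t : z₀ + ε/2 ∈ t := hb (by
      simp [Complex.dist_eq]
      rw [abs_of_pos hε]; linarith)
    have h1 := (htsub _ hz₁t).1
    have h2 : z₀ + ε/2 = z₀ := hi (htsub _ hz₁t).2 hz₀ (sub_eq_zero.mp h1)
    have : (ε/2 : ℂ) = 0 := by linear_combination h2
    simp at this
    norm_num [this] at hε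
  obtain ⟨n, h, hhan, hh0, heq⟩ := hGan.exists_eventuallyEq_pow_smul_nonzero_iff.mpr hne
  have hval : (0:ℂ) = (z₀ - z₀) ^ n • h z₀ := by
    have := heq.self_of_nhds; simpa using this
  have hn0 : n ≠ 0 := by
    rintro rfl
    simp at hval
    exact hh0 hval.symm
  have hderiv0 : deriv (fun z => g z - g z₀) z₀ = 0 := by
    rw [deriv_sub_const]; exact h0
  have hn1 : n ≠ 1 := by
    rintro rfl
    have hD : HasDerivAt (fun z => (z - z₀) ^ 1 • h z) ((1:ℂ) * h z₀ + (z₀ - z₀) * deriv h z₀) z₀ := by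
      simpa using (((hasDerivAt_id z₀).sub_const z₀).fun_mul hhan.differentiableAt.hasDerivAt)
    have heqq : (fun z => g z - g z₀) =ᶠ[𝓝 z₀] (fun z => (z - z₀) ^ 1 • h z) := heq
    have := heqq.deriv_eq
    rw [hderiv0, hD.deriv] at this
    simp at this
    exact hh0 this.symm
  have hn2 : 2 ≤ n := by omega
  have hnC : (n:ℂ) ≠ 0 := Nat.cast_ne_zero.mpr hn0
  -- analytic n-th root of h near z₀
  set r : ℂ → ℂ := fun z => Complex.exp (Complex.log (h z₀) / n) *
      Complex.exp (Complex.log (h z / h z₀) / n) with hr_def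
  have hdiv_an : AnalyticAt ℂ (fun z => h z / h z₀) z₀ := hhan.div analyticAt_const hh0
  have hlog_an : AnalyticAt ℂ (fun z => Complex.log (h z / h z₀)) z₀ :=
    hdiv_an.clog (by simp [div_self hh0])
  have hr_an : AnalyticAt ℂ r z₀ :=
    analyticAt_const.mul ((hlog_an.div analyticAt_const hnC).cexp)
  have hr0 : r z₀ ≠ 0 := mul_ne_zero (Complex.exp_ne_zero _) (Complex.exp_ne_zero _)
  have hrn : ∀ᶠ z in 𝓝 z₀, r z ^ n = h z := by
    filter_upwards [hhan.continuousAt.eventually_ne hh0] with z hz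
    have e1 : Complex.exp (Complex.log (h z₀) / n) ^ n = h z₀ := by
      rw [← Complex.exp_nat_mul, mul_div_cancel₀ _ hnC, Complex.exp_log hh0]
    have e2 : Complex.exp (Complex.log (h z / h z₀) / n) ^ n = h z / h z₀ := by
      rw [← Complex.exp_nat_mul, mul_div_cancel₀ _ hnC,
        Complex.exp_log (div_ne_zero hz hh0)]
    rw [hr_def]
    simp only [mul_pow, e1, e2]
    field_simp
  set φ : ℂ → ℂ := fun z => (z - z₀) * r z with hφ_def
  have hφ_an : AnalyticAt ℂ φ z₀ := (analyticAt_id.sub analyticAt_const).mul hr_an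
  have hφD : HasDerivAt φ (r z₀) z₀ := by
    have := ((hasDerivAt_id z₀).sub_const z₀).fun_mul hr_an.differentiableAt.hasDerivAt
    simpa using this
  have hφS : HasStrictDerivAt φ (r z₀) z₀ := by
    have h1 := (hφ_an.contDiffAt (n := 1)).hasStrictDerivAt one_ne_zero
    rwa [hφD.deriv] at h1
  have hφ0 : φ z₀ = 0 := by simp [hφ_def]
  have hmap : map φ (𝓝 z₀) = 𝓝 (0:ℂ) := by
    have := hφS.map_nhds_eq hr0
    rwa [hφ0] at this
  have hall : ∀ᶠ z in 𝓝 z₀, g z = g z₀ + φ z ^ n ∧ z ∈ V := by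
    filter_upwards [heq, hrn, hV.eventually_mem hz₀] with z h1 h2 h3
    refine ⟨?_, h3⟩
    have : g z - g z₀ = φ z ^ n := by
      rw [h1, hφ_def]; simp only [mul_pow, h2]; simp [smul_eq_mul]
    linear_combination this
  obtain ⟨t, htsub, hto, htz⟩ := _root_.eventually_nhds_iff.mp hall
  have himg : φ '' t ∈ 𝓝 (0:ℂ) := by
    rw [← hmap]
    exact image_mem_map (hto.mem_nhds htz)
  obtain ⟨δ, hδ, hball⟩ := Metric.mem_nhds_iff.mp himg
  set ω : ℂ := Complex.exp (2 * Real.pi * Complex.I / n) with hω_def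
  have hprim := Complex.isPrimitiveRoot_exp n hn0
  have hωn : ω ^ n = 1 := hprim.pow_eq_one
  have hω1 : ω ≠ 1 := by
    intro hh
    have h1 : n ∣ 1 := hprim.dvd_of_pow_eq_one 1 (by rw [pow_one]; exact hh)
    have := Nat.dvd_one.mp h1
    omega
  have hωabs : ‖ω‖ = 1 := by
    have : (2 * Real.pi * Complex.I / n) = ((2 * Real.pi / n : ℝ) : ℂ) * Complex.I := by
      push_cast; ring
    rw [hω_def, this, Complex.norm_exp_ofReal_mul_I]
  set p : ℂ := ((δ/2 : ℝ) : ℂ) with hp_def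
  have hp0 : p ≠ 0 := by
    simp [hp_def]
    positivity
  have hpabs : ‖p‖ = δ/2 := by
    rw [hp_def]
    simp only [Complex.norm_real, Real.norm_eq_abs]
    rw [abs_of_pos (by positivity)]
  have hp_mem : p ∈ ball (0:ℂ) δ := by
    simp [mem_ball, Complex.dist_eq, hpabs]; linarith
  have hωp_mem : ω * p ∈ ball (0:ℂ) δ := by
    simp [mem_ball, Complex.dist_eq, map_mul, hωabs, hpabs]; linarith
  obtain ⟨z₁, hz₁t, hφz₁⟩ := hball hp_mem
  obtain ⟨z₂, hz₂t, hφz₂⟩ := hball hωp_mem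
  have hg1 := (htsub z₁ hz₁t).1
  have hg2 := (htsub z₂ hz₂t).1
  have hgeq : g z₁ = g z₂ := by
    rw [hg1, hg2, hφz₁, hφz₂, mul_pow, hωn, one_mul]
  have hz12 : z₁ = z₂ := hi (htsub z₁ hz₁t).2 (htsub z₂ hz₂t).2 hgeq
  have hpp : (1:ℂ) * p = ω * p := by
    rw [one_mul]
    calc p = φ z₁ := hφz₁.symm
    _ = φ z₂ := by rw [hz12]
    _ = ω * p := hφz₂
  exact hω1 (mul_right_cancel₀ hp0 hpp).symm

/-- Mean value inequality with a polynomially vanishing derivative bound. -/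
lemma taylor_step {g g' : ℂ → ℂ} {s : Set ℂ} (hconv : Convex ℝ s)
    (hder : ∀ x ∈ s, HasDerivAt g (g' x) x) {w : ℂ} (hw : w ∈ s)
    {C : ℝ} (hC : 0 ≤ C) (k : ℕ) (hbound : ∀ x ∈ s, ‖g' x‖ ≤ C * ‖x - w‖ ^ k)
    {z : ℂ} (hz : z ∈ s) : ‖g z - g w‖ ≤ C * ‖z - w‖ ^ (k+1) := by
  set s' := s ∩ Metric.closedBall w ‖z - w‖ with hs'
  have hconv' : Convex ℝ s' := hconv.inter (convex_closedBall _ _)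
  have hzs' : z ∈ s' := ⟨hz, by simp [Metric.mem_closedBall, dist_eq_norm]⟩
  have hws' : w ∈ s' := ⟨hw, Metric.mem_closedBall_self (norm_nonneg _)⟩
  have key := hconv'.norm_image_sub_le_of_norm_hasDerivWithin_le
    (f := g) (f' := g') (C := C * ‖z - w‖ ^ k)
    (fun x hx => (hder x hx.1).hasDerivWithinAt) ?_ hws' hzs'
  · calc ‖g z - g w‖ ≤ C * ‖z - w‖ ^ k * ‖z - w‖ := key
      _ = C * ‖z - w‖ ^ (k+1) := by ring
  · intro x hx
    refine (hbound x hx.1).trans ?_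
    have h1 : ‖x - w‖ ≤ ‖z - w‖ := by
      have := hx.2
      simpa [Metric.mem_closedBall, dist_eq_norm] using this
    have h2 := pow_le_pow_left₀ (norm_nonneg _) h1 k
    exact mul_le_mul_of_nonneg_left h2 hC

lemma norm6 (a b c d e f : ℂ) :
    ‖a + b - c - d - e - f‖ ≤ ‖a‖ + ‖b‖ + ‖c‖ + ‖d‖ + ‖e‖ + ‖f‖ := by
  calc ‖a + b - c - d - e - f‖ ≤ ‖a + b - c - d - e‖ + ‖f‖ := norm_sub_le _ _
    _ ≤ ‖a + b - c - d‖ + ‖e‖ + ‖f‖ := by gcongr; exact norm_sub_le _ _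
    _ ≤ ‖a + b - c‖ + ‖d‖ + ‖e‖ + ‖f‖ := by gcongr; exact norm_sub_le _ _
    _ ≤ ‖a + b‖ + ‖c‖ + ‖d‖ + ‖e‖ + ‖f‖ := by gcongr; exact norm_sub_le _ _
    _ ≤ ‖a‖ + ‖b‖ + ‖c‖ + ‖d‖ + ‖e‖ + ‖f‖ := by gcongr; exact norm_add_le _ _

end Aux

open Filter Metric
open scoped Topology

set_option maxHeartbeats 2000000 in
/-- If an injective holomorphic map `f : 𝔻 → 𝔻` extends to an injective holomorphic
map on an open neighborhood of the closed disk, then `F_f` is square-integrable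
on `𝔻 × 𝔻`. -/
theorem statement_12 (f : ℂ → ℂ)
    (hfm : Set.MapsTo f unitDisk unitDisk)
    (hfd : DifferentiableOn ℂ f unitDisk)
    (hfi : Set.InjOn f unitDisk)
    (U : Set ℂ) (hU : IsOpen U) (hUc : closure unitDisk ⊆ U)
    (ft : ℂ → ℂ)
    (hftd : DifferentiableOn ℂ ft U) (hfti : Set.InjOn ft U)
    (hfte : Set.EqOn ft f unitDisk) :
    IntegrableOn (fun p : ℂ × ℂ => ‖Fcocycle f p.1 p.2‖ ^ 2)
      (unitDisk ×ˢ unitDisk) (μB.prod μB) := by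
  -- Geometry
  have hDball : unitDisk = Metric.ball (0:ℂ) 1 := by
    ext z; simp [unitDisk, Metric.mem_ball, Complex.dist_eq]
  have hDopen : IsOpen unitDisk := by rw [hDball]; exact Metric.isOpen_ball
  have hclo : closure unitDisk = Metric.closedBall (0:ℂ) 1 := by
    rw [hDball, closure_ball (0:ℂ) one_ne_zero]
  obtain ⟨δ, hδpos, hδsub⟩ :=
    (isCompact_closedBall (0:ℂ) 1).exists_thickening_subset_open hU (hclo ▸ hUc)
  set R : ℝ := 1 + δ/2 with hR_def
  have hR1 : 1 < R := by simp [hR_def]; linarith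
  set K : Set ℂ := Metric.closedBall 0 R with hK_def
  have hKU : K ⊆ U := by
    refine subset_trans ?_ hδsub
    rw [thickening_closedBall hδpos zero_le_one]
    intro x hx
    simp only [hK_def, Metric.mem_closedBall] at hx
    simp only [Metric.mem_ball]
    calc dist x 0 ≤ R := hx
      _ < δ + 1 := by simp [hR_def]; linarith
  have hDK : unitDisk ⊆ K := by
    rw [hDball, hK_def]
    exact (Metric.ball_subset_closedBall).trans (Metric.closedBall_subset_closedBall (by linarith))
  have hDU : unitDisk ⊆ U := subset_trans subset_closure hUc
  have hKco : Convex ℝ K := convex_closedBall _ _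
  have hKcp : IsCompact K := isCompact_closedBall _ _
  have h0K : (0:ℂ) ∈ K := Metric.mem_closedBall_self (by linarith)
  -- Derivatives
  set A : ℂ → ℂ := deriv ft with hA_def
  set B : ℂ → ℂ := deriv A with hB_def
  set C1 : ℂ → ℂ := deriv B with hC1_def
  set D1 : ℂ → ℂ := deriv C1 with hD1_def
  have hftan : AnalyticOnNhd ℂ ft U := hftd.analyticOnNhd hU
  have hAan : AnalyticOnNhd ℂ A U := hftan.deriv
  have hBan : AnalyticOnNhd ℂ B U := hAan.deriv
  have hC1an : AnalyticOnNhd ℂ C1 U := hBan.deriv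
  have hD1an : AnalyticOnNhd ℂ D1 U := hC1an.deriv
  have hder_ft : ∀ x ∈ U, HasDerivAt ft (A x) x := fun x hx =>
    ((hftan x hx).differentiableAt).hasDerivAt
  have hder_A : ∀ x ∈ U, HasDerivAt A (B x) x := fun x hx =>
    ((hAan x hx).differentiableAt).hasDerivAt
  have hder_B : ∀ x ∈ U, HasDerivAt B (C1 x) x := fun x hx =>
    ((hBan x hx).differentiableAt).hasDerivAt
  have hder_C1 : ∀ x ∈ U, HasDerivAt C1 (D1 x) x := fun x hx =>
    ((hC1an x hx).differentiableAt).hasDerivAt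
  -- Bounds on K
  obtain ⟨M1, hM1⟩ := hKcp.exists_bound_of_continuousOn (hAan.continuousOn.mono hKU)
  obtain ⟨M2, hM2⟩ := hKcp.exists_bound_of_continuousOn (hBan.continuousOn.mono hKU)
  obtain ⟨M3, hM3⟩ := hKcp.exists_bound_of_continuousOn (hC1an.continuousOn.mono hKU)
  obtain ⟨M4, hM4⟩ := hKcp.exists_bound_of_continuousOn (hD1an.continuousOn.mono hKU)
  have hM1n : 0 ≤ M1 := le_trans (norm_nonneg _) (hM1 0 h0K)
  have hM2n : 0 ≤ M2 := le_trans (norm_nonneg _) (hM2 0 h0K)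
  have hM3n : 0 ≤ M3 := le_trans (norm_nonneg _) (hM3 0 h0K)
  have hM4n : 0 ≤ M4 := le_trans (norm_nonneg _) (hM4 0 h0K)
  -- Taylor-type estimates
  have T0 : ∀ w ∈ K, ∀ z ∈ K, ‖C1 z - C1 w‖ ≤ M4 * ‖z - w‖ ^ 1 := by
    intro w hw z hz
    refine taylor_step hKco (g' := D1) (fun x hx => hder_C1 x (hKU hx)) hw hM4n 0 ?_ hz
    intro x hx; simpa using hM4 x hx
  have TB : ∀ w ∈ K, ∀ z ∈ K, ‖B z - B w‖ ≤ M3 * ‖z - w‖ ^ 1 := by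
    intro w hw z hz
    refine taylor_step hKco (g' := C1) (fun x hx => hder_B x (hKU hx)) hw hM3n 0 ?_ hz
    intro x hx; simpa using hM3 x hx
  have TA : ∀ w ∈ K, ∀ z ∈ K, ‖A z - A w‖ ≤ M2 * ‖z - w‖ ^ 1 := by
    intro w hw z hz
    refine taylor_step hKco (g' := B) (fun x hx => hder_A x (hKU hx)) hw hM2n 0 ?_ hz
    intro x hx; simpa using hM2 x hx
  have T1 : ∀ w ∈ K, ∀ z ∈ K, ‖B z - B w - C1 w * (z - w)‖ ≤ M4 * ‖z - w‖ ^ 2 := by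
    intro w hw z hz
    have key := taylor_step hKco (g := fun y => B y - C1 w * (y - w))
      (g' := fun y => C1 y - C1 w) ?_ hw hM4n 1 (fun x hx => T0 w hw x hx) hz
    · calc ‖B z - B w - C1 w * (z - w)‖
          = ‖(B z - C1 w * (z - w)) - (B w - C1 w * (w - w))‖ := by ring_nf
        _ ≤ M4 * ‖z - w‖ ^ 2 := key
    · intro x hx
      have h1 : HasDerivAt (fun y => C1 w * (y - w)) (C1 w) x := by
        simpa using ((hasDerivAt_id x).sub_const w).const_mul (C1 w)
      exact (hder_B x (hKU hx)).sub h1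
  have T2 : ∀ w ∈ K, ∀ z ∈ K,
      ‖A z - A w - B w * (z - w) - C1 w * (z - w)^2 / 2‖ ≤ M4 * ‖z - w‖ ^ 3 := by
    intro w hw z hz
    have key := taylor_step hKco
      (g := fun y => A y - B w * (y - w) - C1 w * (y - w)^2 / 2)
      (g' := fun y => B y - B w - C1 w * (y - w)) ?_ hw hM4n 2
      (fun x hx => T1 w hw x hx) hz
    · calc ‖A z - A w - B w * (z - w) - C1 w * (z - w)^2 / 2‖
          = ‖(A z - B w * (z - w) - C1 w * (z - w)^2/2)
              - (A w - B w * (w - w) - C1 w * (w - w)^2/2)‖ := by ring_nf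
        _ ≤ M4 * ‖z - w‖ ^ 3 := key
    · intro x hx
      have h1 : HasDerivAt (fun y => B w * (y - w)) (B w) x := by
        simpa using ((hasDerivAt_id x).sub_const w).const_mul (B w)
      have h2 : HasDerivAt (fun y => C1 w * (y - w)^2 / 2) (C1 w * (x - w)) x := by
        have h3 : HasDerivAt (fun y => (y - w)^2) (2 * (x - w)) x := by
          simpa using (((hasDerivAt_id x).sub_const w).fun_pow 2)
        have hfe : (fun y => C1 w * (y - w)^2 / 2) = (fun y => C1 w / 2 * (y - w)^2) := by
          funext y; ring
        rw [hfe]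
        rw [show C1 w * (x - w) = C1 w / 2 * (2 * (x - w)) by ring]
        exact h3.const_mul (C1 w / 2)
      exact ((hder_A x (hKU hx)).sub h1).sub h2
  have T3 : ∀ w ∈ K, ∀ z ∈ K,
      ‖ft z - ft w - A w * (z - w) - B w * (z - w)^2 / 2 - C1 w * (z - w)^3 / 6‖
        ≤ M4 * ‖z - w‖ ^ 4 := by
    intro w hw z hz
    have key := taylor_step hKco
      (g := fun y => ft y - A w * (y - w) - B w * (y - w)^2 / 2 - C1 w * (y - w)^3 / 6)
      (g' := fun y => A y - A w - B w * (y - w) - C1 w * (y - w)^2 / 2) ?_ hw hM4n 3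
      (fun x hx => T2 w hw x hx) hz
    · calc ‖ft z - ft w - A w * (z - w) - B w * (z - w)^2/2 - C1 w * (z - w)^3/6‖
          = ‖(ft z - A w * (z - w) - B w * (z - w)^2/2 - C1 w * (z - w)^3/6)
              - (ft w - A w * (w - w) - B w * (w - w)^2/2 - C1 w * (w - w)^3/6)‖ := by ring_nf
        _ ≤ M4 * ‖z - w‖ ^ 4 := key
    · intro x hx
      have h1 : HasDerivAt (fun y => A w * (y - w)) (A w) x := by
        simpa using ((hasDerivAt_id x).sub_const w).const_mul (A w)
      have h2 : HasDerivAt (fun y => B w * (y - w)^2 / 2) (B w * (x - w)) x := by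
        have h3 : HasDerivAt (fun y => (y - w)^2) (2 * (x - w)) x := by
          simpa using (((hasDerivAt_id x).sub_const w).fun_pow 2)
        have hfe : (fun y => B w * (y - w)^2 / 2) = (fun y => B w / 2 * (y - w)^2) := by
          funext y; ring
        rw [hfe]
        rw [show B w * (x - w) = B w / 2 * (2 * (x - w)) by ring]
        exact h3.const_mul (B w / 2)
      have h5 : HasDerivAt (fun y => C1 w * (y - w)^3 / 6) (C1 w * (x - w)^2 / 2) x := by
        have h3 : HasDerivAt (fun y => (y - w)^3) (3 * (x - w)^2) x := by
          simpa using (((hasDerivAt_id x).sub_const w).fun_pow 3)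
        have hfe : (fun y => C1 w * (y - w)^3 / 6) = (fun y => C1 w / 6 * (y - w)^3) := by
          funext y; ring
        rw [hfe]
        rw [show C1 w * (x - w)^2 / 2 = C1 w / 6 * (3 * (x - w)^2) by ring]
        exact h3.const_mul (C1 w / 6)
      exact (((hder_ft x (hKU hx)).sub h1).sub h2).sub h5
  have U1 : ∀ w ∈ K, ∀ z ∈ K, ‖ft z - ft w - A w * (z - w)‖ ≤ M2 * ‖z - w‖ ^ 2 := by
    intro w hw z hz
    have key := taylor_step hKco (g := fun y => ft y - A w * (y - w))
      (g' := fun y => A y - A w) ?_ hw hM2n 1 (fun x hx => TA w hw x hx) hz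
    · calc ‖ft z - ft w - A w * (z - w)‖
          = ‖(ft z - A w * (z - w)) - (ft w - A w * (w - w))‖ := by ring_nf
        _ ≤ M2 * ‖z - w‖ ^ 2 := key
    · intro x hx
      have h1 : HasDerivAt (fun y => A w * (y - w)) (A w) x := by
        simpa using ((hasDerivAt_id x).sub_const w).const_mul (A w)
      exact (hder_ft x (hKU hx)).sub h1
  -- derivative does not vanish
  have hA_ne : ∀ x ∈ K, A x ≠ 0 := fun x hx => aux_deriv_ne_zero hU hftd hfti (hKU hx)
  obtain ⟨x₀, hx₀K, hx₀min⟩ := hKcp.exists_isMinOn ⟨0, h0K⟩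
    ((hAan.continuousOn.mono hKU).norm)
  set m : ℝ := ‖A x₀‖ with hm_def
  have hm : 0 < m := norm_pos_iff.mpr (hA_ne x₀ hx₀K)
  have hmle : ∀ x ∈ K, m ≤ ‖A x‖ := fun x hx => hx₀min hx
  -- lower bound on |ft z - ft w|
  set δ₀ : ℝ := m / (2 * (M2 + 1)) with hδ₀_def
  have hδ₀pos : 0 < δ₀ := by
    rw [hδ₀_def]; exact div_pos hm (by linarith)
  have hnear : ∀ w ∈ K, ∀ z ∈ K, ‖z - w‖ ≤ δ₀ → m / 2 * ‖z - w‖ ≤ ‖ft z - ft w‖ := by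
    intro w hw z hz hsmall
    have h1 := U1 w hw z hz
    have h2 : ‖A w * (z - w)‖ ≤ ‖ft z - ft w‖ + ‖ft z - ft w - A w * (z - w)‖ := by
      have h3 := norm_add_le (ft z - ft w) (A w * (z - w) - (ft z - ft w))
      have h4 : ‖A w * (z - w) - (ft z - ft w)‖ = ‖ft z - ft w - A w * (z - w)‖ :=
        norm_sub_rev _ _
      calc ‖A w * (z - w)‖ = ‖ft z - ft w + (A w * (z - w) - (ft z - ft w))‖ := by ring_nf
        _ ≤ ‖ft z - ft w‖ + ‖A w * (z - w) - (ft z - ft w)‖ := h3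
        _ = ‖ft z - ft w‖ + ‖ft z - ft w - A w * (z - w)‖ := by rw [h4]
    have h5 : m * ‖z - w‖ ≤ ‖A w * (z - w)‖ := by
      rw [norm_mul]
      exact mul_le_mul_of_nonneg_right (hmle w hw) (norm_nonneg _)
    have h6 : M2 * ‖z - w‖ ^ 2 ≤ M2 * δ₀ * ‖z - w‖ := by
      have h6a : ‖z - w‖ * ‖z - w‖ ≤ δ₀ * ‖z - w‖ :=
        mul_le_mul_of_nonneg_right hsmall (norm_nonneg _)
      calc M2 * ‖z - w‖ ^ 2 = M2 * (‖z - w‖ * ‖z - w‖) := by ring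
        _ ≤ M2 * (δ₀ * ‖z - w‖) := mul_le_mul_of_nonneg_left h6a hM2n
        _ = M2 * δ₀ * ‖z - w‖ := by ring
    have h7 : M2 * δ₀ ≤ m / 2 := by
      have hpos : (0:ℝ) < 2 * (M2 + 1) := by linarith
      rw [hδ₀_def, mul_div_assoc', div_le_div_iff₀ hpos (by norm_num)]
      nlinarith
    nlinarith [norm_nonneg (z - w), mul_le_mul_of_nonneg_right h7 (norm_nonneg (z - w))]
  have hlow : ∃ c > 0, ∀ w ∈ K, ∀ z ∈ K, c * ‖z - w‖ ≤ ‖ft z - ft w‖ := by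
    set S : Set (ℂ × ℂ) := (K ×ˢ K) ∩ {p : ℂ × ℂ | δ₀ ≤ ‖p.1 - p.2‖} with hS_def
    have hScp : IsCompact S := (hKcp.prod hKcp).inter_right
      (isClosed_le continuous_const (continuous_fst.sub continuous_snd).norm)
    by_cases hSne : S.Nonempty
    · obtain ⟨q, hqS, hqmin⟩ := hScp.exists_isMinOn hSne
        (((hftan.continuousOn.mono hKU).comp continuous_fst.continuousOn
            (fun p hp => (hS_def ▸ hp).1.1)).sub
          ((hftan.continuousOn.mono hKU).comp continuous_snd.continuousOn
            (fun p hp => (hS_def ▸ hp).1.2))).norm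
      set c₁ : ℝ := ‖ft q.1 - ft q.2‖ with hc₁_def
      have hq12 : q.1 ≠ q.2 := by
        intro hq
        have := hqS.2
        simp only [mem_setOf_eq, hq, sub_self, norm_zero] at this
        linarith
      have hc₁pos : 0 < c₁ := by
        rw [hc₁_def]
        refine norm_pos_iff.mpr (sub_ne_zero.mpr ?_)
        exact fun hh => hq12 (hfti (hKU hqS.1.1) (hKU hqS.1.2) hh)
      refine ⟨min (m/2) (c₁ / (2*R)), lt_min (by linarith) (by positivity), ?_⟩
      intro w hw z hz
      by_cases hcase : ‖z - w‖ ≤ δ₀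
      · calc min (m/2) (c₁/(2*R)) * ‖z - w‖ ≤ m/2 * ‖z - w‖ := by
              exact mul_le_mul_of_nonneg_right (min_le_left _ _) (norm_nonneg _)
          _ ≤ ‖ft z - ft w‖ := hnear w hw z hz hcase
      · push_neg at hcase
        have hzw2R : ‖z - w‖ ≤ 2*R := by
          have hz' : ‖z‖ ≤ R := by
            have := hz
            simp only [hK_def, Metric.mem_closedBall, dist_zero_right] at this
            exact this
          have hw' : ‖w‖ ≤ R := by
            have := hw
            simp only [hK_def, Metric.mem_closedBall, dist_zero_right] at this
            exact this
          calc ‖z - w‖ ≤ ‖z‖ + ‖w‖ := norm_sub_le _ _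
            _ ≤ 2*R := by linarith
        have hmem : (z, w) ∈ S := ⟨⟨hz, hw⟩, le_of_lt hcase⟩
        have := hqmin hmem
        calc min (m/2) (c₁/(2*R)) * ‖z - w‖ ≤ c₁/(2*R) * ‖z - w‖ :=
              mul_le_mul_of_nonneg_right (min_le_right _ _) (norm_nonneg _)
          _ ≤ c₁/(2*R) * (2*R) := by
              exact mul_le_mul_of_nonneg_left hzw2R (by positivity)
          _ = c₁ := by field_simp
          _ ≤ ‖ft z - ft w‖ := this
    · refine ⟨m/2, by linarith, ?_⟩
      intro w hw z hz
      by_cases hcase : ‖z - w‖ ≤ δ₀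
      · exact hnear w hw z hz hcase
      · exact absurd ⟨⟨hz, hw⟩, le_of_lt (not_le.mp hcase)⟩ (fun hmem => hSne ⟨(z,w), hmem⟩)
  obtain ⟨c, hcpos, hclow⟩ := hlow
  -- numerator bound
  set ρ : ℝ := 2 * R with hρ_def
  have hρpos : 0 < ρ := by rw [hρ_def]; linarith
  have hhle : ∀ w ∈ K, ∀ z ∈ K, ‖z - w‖ ≤ ρ := by
    intro w hw z hz
    have hz' : ‖z‖ ≤ R := by
      have := hz
      simp only [hK_def, Metric.mem_closedBall, dist_zero_right] at this
      exact this
    have hw' : ‖w‖ ≤ R := by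
      have := hw
      simp only [hK_def, Metric.mem_closedBall, dist_zero_right] at this
      exact this
    calc ‖z - w‖ ≤ ‖z‖ + ‖w‖ := norm_sub_le _ _
      _ ≤ ρ := by rw [hρ_def]; linarith
  set L : ℝ := (M1*M3 + M2*M2) + M1*M4*ρ + 2*M2*M3*ρ + M3*M3*ρ^2
      + 2*(M1+M2*ρ+M3*ρ^2)*M4*ρ + M4*M4*ρ^4 with hL_def
  have hLn : 0 ≤ L := by rw [hL_def]; positivity
  have hnum : ∀ w ∈ K, ∀ z ∈ K,
      ‖A z * A w * (z - w)^2 - (ft z - ft w)^2‖ ≤ L * ‖z - w‖^4 := by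
    intro w hw z hz
    set h : ℂ := z - w with hh_def
    set a1 : ℂ := A w with ha1_def
    set a2 : ℂ := B w / 2 with ha2_def
    set a3 : ℂ := C1 w / 6 with ha3_def
    set Rr : ℂ := ft z - ft w - (a1*h + a2*h^2 + a3*h^3) with hRr_def
    set Ss : ℂ := A z - (a1 + 2*a2*h + 3*a3*h^2) with hSs_def
    have hRr : ‖Rr‖ ≤ M4 * ‖h‖^4 := by
      have h1 := T3 w hw z hz
      have e : ft z - ft w - A w * (z - w) - B w * (z - w)^2/2 - C1 w * (z - w)^3/6 = Rr := by
        rw [hRr_def, ha1_def, ha2_def, ha3_def, hh_def]; ring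
      rwa [e] at h1
    have hSs : ‖Ss‖ ≤ M4 * ‖h‖^3 := by
      have h1 := T2 w hw z hz
      have e : A z - A w - B w * (z - w) - C1 w * (z - w)^2/2 = Ss := by
        rw [hSs_def, ha1_def, ha2_def, ha3_def, hh_def]; ring
      rwa [e] at h1
    have ha1b : ‖a1‖ ≤ M1 := hM1 w hw
    have ha2b : ‖a2‖ ≤ M2 := by
      rw [ha2_def, norm_div]
      have : ‖(2:ℂ)‖ = 2 := by norm_num
      rw [this]
      have := hM2 w hw
      linarith
    have ha3b : ‖a3‖ ≤ M3 := by
      rw [ha3_def, norm_div]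
      have : ‖(6:ℂ)‖ = 6 := by norm_num
      rw [this]
      have := hM3 w hw
      linarith
    have hhρ : ‖h‖ ≤ ρ := hhle w hw z hz
    have hid : A z * A w * h^2 - (ft z - ft w)^2
        = h^4*(a1*a3 - a2^2) + h^2*a1*Ss - 2*a2*a3*h^5 - a3^2*h^6
          - (2*(a1*h + a2*h^2 + a3*h^3))*Rr - Rr^2 := by
      have e1 : A z = a1 + 2*a2*h + 3*a3*h^2 + Ss := by rw [hSs_def]; ring
      have e2 : ft z - ft w = a1*h + a2*h^2 + a3*h^3 + Rr := by rw [hRr_def]; ring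
      rw [e1, ha1_def.symm]
      calc (a1 + 2*a2*h + 3*a3*h^2 + Ss) * a1 * h^2 - (ft z - ft w)^2
          = (a1 + 2*a2*h + 3*a3*h^2 + Ss) * a1 * h^2
            - (a1*h + a2*h^2 + a3*h^3 + Rr)^2 := by rw [← e2]
        _ = h^4*(a1*a3 - a2^2) + h^2*a1*Ss - 2*a2*a3*h^5 - a3^2*h^6
            - (2*(a1*h + a2*h^2 + a3*h^3))*Rr - Rr^2 := by ring
    have hb1 : ‖h^4*(a1*a3 - a2^2)‖ ≤ (M1*M3 + M2*M2) * ‖h‖^4 := by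
      rw [norm_mul, norm_pow]
      have : ‖a1*a3 - a2^2‖ ≤ M1*M3 + M2*M2 := by
        calc ‖a1*a3 - a2^2‖ ≤ ‖a1*a3‖ + ‖a2^2‖ := norm_sub_le _ _
          _ = ‖a1‖*‖a3‖ + ‖a2‖*‖a2‖ := by rw [norm_mul, sq, norm_mul]
          _ ≤ M1*M3 + M2*M2 := by gcongr
      calc ‖h‖^4 * ‖a1*a3 - a2^2‖ ≤ ‖h‖^4 * (M1*M3 + M2*M2) := by
            exact mul_le_mul_of_nonneg_left this (by positivity)
        _ = (M1*M3 + M2*M2) * ‖h‖^4 := by ring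
    have hb2 : ‖h^2*a1*Ss‖ ≤ M1*M4*ρ * ‖h‖^4 := by
      rw [norm_mul, norm_mul, norm_pow]
      calc ‖h‖^2 * ‖a1‖ * ‖Ss‖ ≤ ‖h‖^2 * M1 * (M4*‖h‖^3) := by
            gcongr
        _ = M1*M4*(‖h‖^4*‖h‖) := by ring
        _ ≤ M1*M4*(‖h‖^4*ρ) := by gcongr
        _ = M1*M4*ρ*‖h‖^4 := by ring
    have hb3 : ‖2*a2*a3*h^5‖ ≤ 2*M2*M3*ρ * ‖h‖^4 := by
      rw [norm_mul, norm_mul, norm_mul, norm_pow]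
      have h2n : ‖(2:ℂ)‖ = 2 := by norm_num
      rw [h2n]
      calc 2 * ‖a2‖ * ‖a3‖ * ‖h‖^5 ≤ 2 * M2 * M3 * ‖h‖^5 := by gcongr
        _ = 2*M2*M3*(‖h‖^4*‖h‖) := by ring
        _ ≤ 2*M2*M3*(‖h‖^4*ρ) := by gcongr
        _ = 2*M2*M3*ρ*‖h‖^4 := by ring
    have hb4 : ‖a3^2*h^6‖ ≤ M3*M3*ρ^2 * ‖h‖^4 := by
      rw [norm_mul, norm_pow, norm_pow]
      calc ‖a3‖^2 * ‖h‖^6 ≤ M3^2 * ‖h‖^6 := by gcongr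
        _ = M3*M3*(‖h‖^4*‖h‖^2) := by ring
        _ ≤ M3*M3*(‖h‖^4*ρ^2) := by gcongr
        _ = M3*M3*ρ^2*‖h‖^4 := by ring
    have hb5 : ‖(2*(a1*h + a2*h^2 + a3*h^3))*Rr‖ ≤ 2*(M1+M2*ρ+M3*ρ^2)*M4*ρ * ‖h‖^4 := by
      rw [norm_mul]
      have hP : ‖2*(a1*h + a2*h^2 + a3*h^3)‖ ≤ 2*((M1+M2*ρ+M3*ρ^2)*‖h‖) := by
        rw [norm_mul]
        have h2n : ‖(2:ℂ)‖ = 2 := by norm_num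
        rw [h2n]
        have : ‖a1*h + a2*h^2 + a3*h^3‖ ≤ (M1+M2*ρ+M3*ρ^2)*‖h‖ := by
          calc ‖a1*h + a2*h^2 + a3*h^3‖
              ≤ ‖a1*h‖ + ‖a2*h^2‖ + ‖a3*h^3‖ := norm_add₃_le
            _ = ‖a1‖*‖h‖ + ‖a2‖*(‖h‖*‖h‖) + ‖a3‖*(‖h‖^2*‖h‖) := by
                rw [norm_mul, norm_mul, norm_mul, norm_pow, norm_pow]; ring
            _ ≤ M1*‖h‖ + M2*(ρ*‖h‖) + M3*(ρ^2*‖h‖) := by gcongr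
            _ = (M1+M2*ρ+M3*ρ^2)*‖h‖ := by ring
        linarith
      calc ‖2*(a1*h + a2*h^2 + a3*h^3)‖ * ‖Rr‖
          ≤ (2*((M1+M2*ρ+M3*ρ^2)*‖h‖)) * (M4*‖h‖^4) := by gcongr
        _ = 2*(M1+M2*ρ+M3*ρ^2)*M4*(‖h‖^4*‖h‖) := by ring
        _ ≤ 2*(M1+M2*ρ+M3*ρ^2)*M4*(‖h‖^4*ρ) := by gcongr
        _ = 2*(M1+M2*ρ+M3*ρ^2)*M4*ρ * ‖h‖^4 := by ring
    have hb6 : ‖Rr^2‖ ≤ M4*M4*ρ^4 * ‖h‖^4 := by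
      rw [norm_pow]
      calc ‖Rr‖^2 ≤ (M4*‖h‖^4)^2 := by gcongr
        _ = M4*M4*(‖h‖^4*‖h‖^4) := by ring
        _ ≤ M4*M4*(‖h‖^4*ρ^4) := by gcongr
        _ = M4*M4*ρ^4*‖h‖^4 := by ring
    rw [hid]
    calc ‖h^4*(a1*a3 - a2^2) + h^2*a1*Ss - 2*a2*a3*h^5 - a3^2*h^6
          - (2*(a1*h + a2*h^2 + a3*h^3))*Rr - Rr^2‖
        ≤ ‖h^4*(a1*a3 - a2^2)‖ + ‖h^2*a1*Ss‖ + ‖2*a2*a3*h^5‖ + ‖a3^2*h^6‖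
          + ‖(2*(a1*h + a2*h^2 + a3*h^3))*Rr‖ + ‖Rr^2‖ := by
          have := norm6 (h^4*(a1*a3 - a2^2)) (h^2*a1*Ss) (2*a2*a3*h^5) (a3^2*h^6)
            ((2*(a1*h + a2*h^2 + a3*h^3))*Rr) (Rr^2)
          exact this
      _ ≤ L * ‖h‖^4 := by
          rw [hL_def]
          linarith
  -- pointwise bound on the disk
  have hpt : ∀ z ∈ unitDisk, ∀ w ∈ unitDisk, z ≠ w → ‖Fcocycle f z w‖ ≤ L / c^2 := by
    intro z hz w hw hzw
    have hzK := hDK hz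
    have hwK := hDK hw
    have hzU := hDU hz
    have hwU := hDU hw
    have hfz : f z = ft z := (hfte hz).symm
    have hfw : f w = ft w := (hfte hw).symm
    have hdfz : deriv f z = A z := by
      rw [hA_def]
      exact ((hfte.eventuallyEq_of_mem (hDopen.mem_nhds hz)).deriv_eq).symm
    have hdfw : deriv f w = A w := by
      rw [hA_def]
      exact ((hfte.eventuallyEq_of_mem (hDopen.mem_nhds hw)).deriv_eq).symm
    have hΔ : ft z - ft w ≠ 0 := sub_ne_zero.mpr (fun e => hzw (hfti hzU hwU e))
    have hhne : z - w ≠ 0 := sub_ne_zero.mpr hzw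
    have hF : Fcocycle f z w
        = (A z * A w * (z-w)^2 - (ft z - ft w)^2) / ((ft z - ft w)^2 * (z-w)^2) := by
      simp only [Fcocycle]
      rw [hdfz, hdfw, hfz, hfw]
      field_simp
    rw [hF, norm_div, norm_mul, norm_pow, norm_pow]
    have hlow1 : c * ‖z - w‖ ≤ ‖ft z - ft w‖ := hclow w hwK z hzK
    have hnum1 : ‖A z * A w * (z-w)^2 - (ft z - ft w)^2‖ ≤ L * ‖z-w‖^4 := hnum w hwK z hzK
    have hhn : 0 < ‖z - w‖ := norm_pos_iff.mpr hhne
    have hden_ge : c^2 * ‖z-w‖^4 ≤ ‖ft z - ft w‖^2 * ‖z-w‖^2 := by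
      have hsq : (c*‖z-w‖)^2 ≤ ‖ft z - ft w‖^2 := by
        have h0 : 0 ≤ c * ‖z - w‖ := by positivity
        exact pow_le_pow_left₀ h0 hlow1 2
      calc c^2*‖z-w‖^4 = (c*‖z-w‖)^2 * ‖z-w‖^2 := by ring
        _ ≤ ‖ft z - ft w‖^2 * ‖z-w‖^2 := mul_le_mul_of_nonneg_right hsq (by positivity)
    have hden_pos : 0 < c^2 * ‖z-w‖^4 := by positivity
    have h4ne : ‖z-w‖^4 ≠ 0 := by positivity
    calc ‖A z * A w * (z-w)^2 - (ft z - ft w)^2‖ / (‖ft z - ft w‖^2 * ‖z-w‖^2)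
        ≤ (L * ‖z-w‖^4) / (c^2 * ‖z-w‖^4) := by
          apply div_le_div₀ (by positivity) hnum1 hden_pos hden_ge
      _ = (‖z-w‖^4 * L) / (‖z-w‖^4 * c^2) := by ring_nf
      _ = L / c^2 := mul_div_mul_left _ _ h4ne
  -- Integrability
  haveI hsfin : SFinite μB := by
    rw [show μB = (ENNReal.ofReal (Real.pi)⁻¹) • (volume : Measure ℂ) from rfl]
    infer_instance
  have hsmeas : MeasurableSet (unitDisk ×ˢ unitDisk) := (hDopen.prod hDopen).measurableSet
  set Dg : Set (ℂ × ℂ) := {p : ℂ × ℂ | p.1 = p.2} with hDg_def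
  have hDgm : MeasurableSet Dg := (isClosed_eq continuous_fst continuous_snd).measurableSet
  have hμBs : ∀ x : ℂ, μB {x} = 0 := by
    intro x
    simp only [μB, Measure.smul_apply, measure_singleton, smul_eq_mul, mul_zero]
  have hDg0 : (μB.prod μB) Dg = 0 := by
    rw [MeasureTheory.Measure.measure_prod_null hDgm]
    refine Filter.Eventually.of_forall (fun x => ?_)
    have hpre : Prod.mk x ⁻¹' Dg = {x} := by
      ext y; simp [hDg_def, eq_comm]
    simp [hpre, hμBs x]
  have hcont : ContinuousOn (fun p : ℂ × ℂ => ‖Fcocycle f p.1 p.2‖^2)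
      ((unitDisk ×ˢ unitDisk) \ Dg) := by
    have hAcont : ContinuousOn A U := hAan.continuousOn
    have hftcont : ContinuousOn ft U := hftan.continuousOn
    have hsub1 : ∀ p : ℂ × ℂ, p ∈ (unitDisk ×ˢ unitDisk) \ Dg → p.1 ∈ U :=
      fun p hp => hDU hp.1.1
    have hsub2 : ∀ p : ℂ × ℂ, p ∈ (unitDisk ×ˢ unitDisk) \ Dg → p.2 ∈ U :=
      fun p hp => hDU hp.1.2
    have hg : ContinuousOn (fun p : ℂ × ℂ =>
        A p.1 * A p.2 / (ft p.1 - ft p.2)^2 - 1/(p.1 - p.2)^2)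
        ((unitDisk ×ˢ unitDisk) \ Dg) := by
      refine ContinuousOn.sub ?_ ?_
      · refine ContinuousOn.div ?_ ?_ ?_
        · exact ((hAcont.comp continuous_fst.continuousOn hsub1).mul
            (hAcont.comp continuous_snd.continuousOn hsub2))
        · exact ((hftcont.comp continuous_fst.continuousOn hsub1).sub
            (hftcont.comp continuous_snd.continuousOn hsub2)).pow 2
        · intro p hp
          refine pow_ne_zero _ (sub_ne_zero.mpr ?_)
          exact fun e => hp.2 (hfti (hsub1 p hp) (hsub2 p hp) e)
      · refine ContinuousOn.div continuousOn_const ?_ ?_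
        · exact (continuous_fst.continuousOn.sub continuous_snd.continuousOn).pow 2
        · intro p hp
          exact pow_ne_zero _ (sub_ne_zero.mpr hp.2)
    have heq : Set.EqOn (fun p : ℂ × ℂ => ‖Fcocycle f p.1 p.2‖^2)
        (fun p : ℂ × ℂ => ‖A p.1 * A p.2 / (ft p.1 - ft p.2)^2 - 1/(p.1 - p.2)^2‖^2)
        ((unitDisk ×ˢ unitDisk) \ Dg) := by
      intro p hp
      have h1 : deriv f p.1 = A p.1 := by
        rw [hA_def]
        exact ((hfte.eventuallyEq_of_mem (hDopen.mem_nhds hp.1.1)).deriv_eq).symm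
      have h2 : deriv f p.2 = A p.2 := by
        rw [hA_def]
        exact ((hfte.eventuallyEq_of_mem (hDopen.mem_nhds hp.1.2)).deriv_eq).symm
      simp only [Fcocycle, h1, h2, hfte hp.1.1, hfte hp.1.2]
    exact (ContinuousOn.pow (hg.norm) 2).congr heq
  have hAESM : AEStronglyMeasurable (fun p : ℂ × ℂ => ‖Fcocycle f p.1 p.2‖^2)
      ((μB.prod μB).restrict (unitDisk ×ˢ unitDisk)) := by
    have h1 := hcont.aestronglyMeasurable (μ := μB.prod μB) (hsmeas.diff hDgm)
    have h2 : (μB.prod μB).restrict ((unitDisk ×ˢ unitDisk) \ Dg)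
        = (μB.prod μB).restrict (unitDisk ×ˢ unitDisk) := by
      refine Measure.restrict_congr_set ?_
      refine diff_ae_eq_self.mpr ?_
      exact measure_mono_null inter_subset_right hDg0
    rwa [h2] at h1
  have hfin : (μB.prod μB) (unitDisk ×ˢ unitDisk) < ⊤ := by
    rw [Measure.prod_prod]
    have h1 : μB unitDisk < ⊤ := by
      simp only [μB, Measure.smul_apply, smul_eq_mul]
      refine ENNReal.mul_lt_top ?_ ?_
      · exact ENNReal.ofReal_lt_top
      · rw [hDball]; exact measure_ball_lt_top
    exact ENNReal.mul_lt_top h1 h1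
  refine Integrable.mono' (g := fun _ : ℂ × ℂ => (L/c^2)^2)
    (integrableOn_const hfin.ne) hAESM ?_
  have hae1 : ∀ᵐ p ∂(μB.prod μB).restrict (unitDisk ×ˢ unitDisk),
      p ∈ unitDisk ×ˢ unitDisk := ae_restrict_mem hsmeas
  have hae2 : ∀ᵐ p ∂(μB.prod μB).restrict (unitDisk ×ˢ unitDisk), p ∉ Dg := by
    refine measure_eq_zero_iff_ae_notMem.mp ?_
    rw [Measure.restrict_apply hDgm]
    exact measure_mono_null inter_subset_left hDg0
  filter_upwards [hae1, hae2] with p hp hpd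
  have hne : p.1 ≠ p.2 := hpd
  have hb := hpt p.1 hp.1 p.2 hp.2 hne
  have hLc : 0 ≤ L / c^2 := by positivity
  have h0 : (0:ℝ) ≤ ‖Fcocycle f p.1 p.2‖^2 := by positivity
  rw [Real.norm_eq_abs, _root_.abs_of_nonneg h0]
  exact pow_le_pow_left₀ (norm_nonneg _) hb 2
end
end

section
/- Let φ : 𝔻 → 𝔻 be an injective holomorphic map and let f be in the Bergman space A²(𝔻). Then the function z ↦ φ'(z)·f(φ(z)) belongs to A²(𝔻) and ∫_𝔻 |φ'(z)·f(φ(z))|² dμ(z) ≤ ∫_𝔻 |f(z)|² dμ(z); that is, the composition operator T_φ f = φ'·(f∘φ) on A²(𝔻) has operator norm at most 1. -/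
open MeasureTheory Complex Set

noncomputable section

lemma det_restrict_aux (c : ℂ) :
    (((1 : ℂ →L[ℂ] ℂ).smulRight c).restrictScalars ℝ).det = Complex.normSq c := by
  have h : (((1 : ℂ →L[ℂ] ℂ).smulRight c).restrictScalars ℝ : ℂ →ₗ[ℝ] ℂ)
      = Algebra.lmul ℝ ℂ c := by
    ext z
    simp [mul_comm]
  rw [ContinuousLinearMap.det, h, ← Algebra.norm_apply, Algebra.norm_complex_apply]

/-- For an injective holomorphic map `φ : 𝔻 → 𝔻` and `f ∈ A²(𝔻)`, the function
`z ↦ φ'(z)·f(φ(z))` belongs to `A²(𝔻)` and its L² norm (squared) is at most that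
of `f`; i.e. the operator `T_φ f = φ'·(f∘φ)` has norm at most `1`. -/
theorem statement_14 (φ : ℂ → ℂ)
    (hφm : Set.MapsTo φ unitDisk unitDisk)
    (hφd : DifferentiableOn ℂ φ unitDisk)
    (hφi : Set.InjOn φ unitDisk)
    (f : ℂ → ℂ)
    (hf_hol : DifferentiableOn ℂ f unitDisk)
    (hf_sq : IntegrableOn (fun z => ‖f z‖ ^ 2) unitDisk μB) :
    DifferentiableOn ℂ (fun z => deriv φ z * f (φ z)) unitDisk ∧
    IntegrableOn (fun z => ‖deriv φ z * f (φ z)‖ ^ 2) unitDisk μB ∧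
    ∫ z in unitDisk, ‖deriv φ z * f (φ z)‖ ^ 2 ∂μB
      ≤ ∫ z in unitDisk, ‖f z‖ ^ 2 ∂μB := by
  have hOpen := isOpen_unitDisk
  have hMeas : MeasurableSet unitDisk := hOpen.measurableSet
  -- differentiability
  have hderiv : DifferentiableOn ℂ (deriv φ) unitDisk :=
    ((hφd.analyticOnNhd hOpen).deriv).differentiableOn
  have hdiff : DifferentiableOn ℂ (fun z => deriv φ z * f (φ z)) unitDisk :=
    hderiv.mul (hf_hol.comp hφd hφm)
  refine ⟨hdiff, ?_, ?_⟩
  all_goals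
    -- set up the fderiv
    set F : ℂ → (ℂ →L[ℝ] ℂ) :=
      fun x => ((1 : ℂ →L[ℂ] ℂ).smulRight (deriv φ x)).restrictScalars ℝ with hF
    have hφ' : ∀ x ∈ unitDisk, HasFDerivWithinAt φ (F x) unitDisk x := by
      intro x hx
      have h1 : DifferentiableAt ℂ φ x := hφd.differentiableAt (hOpen.mem_nhds hx)
      exact (h1.hasDerivAt.hasFDerivAt.restrictScalars ℝ).hasFDerivWithinAt
    have hdet : ∀ x, |(F x).det| = ‖deriv φ x‖ ^ 2 := by
      intro x
      rw [hF, det_restrict_aux, _root_.abs_of_nonneg (Complex.normSq_nonneg _),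
        Complex.normSq_eq_norm_sq]
    have hkey : ∀ x, |(F x).det| • ‖f (φ x)‖ ^ 2 = ‖deriv φ x * f (φ x)‖ ^ 2 := by
      intro x
      rw [hdet, smul_eq_mul, norm_mul, mul_pow]
    have hc0 : (ENNReal.ofReal (Real.pi)⁻¹) ≠ 0 := by
      simp [ENNReal.ofReal_eq_zero, Real.pi_pos, inv_pos.2 Real.pi_pos, le_of_lt]
    have hcT : (ENNReal.ofReal (Real.pi)⁻¹) ≠ ⊤ := ENNReal.ofReal_ne_top
    -- integrability of ‖f‖² on 𝔻 w.r.t. volume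
    have hf_vol : IntegrableOn (fun z => ‖f z‖ ^ 2) unitDisk volume := by
      have := hf_sq
      rw [IntegrableOn, μB, Measure.restrict_smul, integrable_smul_measure hc0 hcT] at this
      exact this
    -- integrability on the image
    have himg : IntegrableOn (fun z => ‖f z‖ ^ 2) (φ '' unitDisk) volume :=
      hf_vol.mono_set (hφm.image_subset)
    have hint : IntegrableOn (fun x => |(F x).det| • ‖f (φ x)‖ ^ 2) unitDisk volume :=
      (integrableOn_image_iff_integrableOn_abs_det_fderiv_smul volume hMeas hφ' hφi
        (fun z => ‖f z‖ ^ 2)).mp himg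
    have hint' : IntegrableOn (fun z => ‖deriv φ z * f (φ z)‖ ^ 2) unitDisk volume := by
      refine hint.congr_fun (fun x _ => hkey x) hMeas
    first
    | -- integrability goal
      (rw [IntegrableOn, μB, Measure.restrict_smul, integrable_smul_measure hc0 hcT]
       exact hint')
    | -- integral inequality goal
      (have hchg : ∫ x in φ '' unitDisk, ‖f x‖ ^ 2
          = ∫ x in unitDisk, |(F x).det| • ‖f (φ x)‖ ^ 2 :=
        integral_image_eq_integral_abs_det_fderiv_smul volume hMeas hφ' hφi _
       have hle : ∫ x in unitDisk, ‖deriv φ x * f (φ x)‖ ^ 2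
          ≤ ∫ x in unitDisk, ‖f x‖ ^ 2 := by
         have h1 : ∫ x in unitDisk, ‖deriv φ x * f (φ x)‖ ^ 2
             = ∫ x in φ '' unitDisk, ‖f x‖ ^ 2 := by
           rw [hchg]
           exact setIntegral_congr_fun hMeas fun x _ => (hkey x).symm
         rw [h1]
         refine setIntegral_mono_set hf_vol ?_ (hφm.image_subset.eventuallyLE)
         exact Filter.Eventually.of_forall fun x => by positivity
       calc ∫ z in unitDisk, ‖deriv φ z * f (φ z)‖ ^ 2 ∂μB
           = (Real.pi)⁻¹ • ∫ z in unitDisk, ‖deriv φ z * f (φ z)‖ ^ 2 := by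
             rw [μB, Measure.restrict_smul, integral_smul_measure,
               ENNReal.toReal_ofReal (le_of_lt (inv_pos.2 Real.pi_pos))]
         _ ≤ (Real.pi)⁻¹ • ∫ z in unitDisk, ‖f z‖ ^ 2 := by
             exact smul_le_smul_of_nonneg_left hle (le_of_lt (inv_pos.2 Real.pi_pos))
         _ = ∫ z in unitDisk, ‖f z‖ ^ 2 ∂μB := by
             rw [μB, Measure.restrict_smul, integral_smul_measure,
               ENNReal.toReal_ofReal (le_of_lt (inv_pos.2 Real.pi_pos))])
end
end
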